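/- arXiv:1409.6277 — 6 statements merged into one kernel-verified Lean document; each statement's English description precedes it below -/
import Mathlib

section
/- Let u, v, x, y be four distinct vertices of a directed graph G such that u↔vr x, v↔vr x, u↔vr y, and v↔vr y. Then also x↔vr y and u↔vr v. -/
variable {V : Type*}

/-- Mutual reachability (strong connectivity of a pair) in the digraph `E`. -/
def SConn (E : V → V → Prop) (u v : V) : Prop :=
  Relation.ReflTransGen E u v ∧ Relation.ReflTransGen E v u

/-- The digraph obtained from `E` by deleting vertex `w` (and incident edges). -/
def delV (E : V → V → Prop) (w : V) : V → V → Prop :=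
  fun a b => E a b ∧ a ≠ w ∧ b ≠ w

/-- The digraph obtained from `E` by deleting the single edge `(a,b)`. -/
def delE (E : V → V → Prop) (a b : V) : V → V → Prop :=
  fun x y => E x y ∧ ¬(x = a ∧ y = b)

/-- `u` and `v` are vertex-resilient: they are distinct and remain strongly
connected after deletion of any single other vertex. -/
def VRes (E : V → V → Prop) (u v : V) : Prop :=
  u ≠ v ∧ ∀ w, w ≠ u → w ≠ v → SConn (delV E w) u v

/-- A vertex-resilient block: a maximal set of size ≥ 2 of pairwise
vertex-resilient vertices. -/
def IsVRBlock (E : V → V → Prop) (B : Set V) : Prop :=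
  B.Pairwise (VRes E) ∧ (∃ a ∈ B, ∃ b ∈ B, a ≠ b) ∧
    ∀ B' : Set V, B ⊆ B' → B'.Pairwise (VRes E) → B' = B

/-- `l` is (the vertex list of) a directed path from `u` to `v` in `E`. -/
def IsPathList (E : V → V → Prop) (u v : V) (l : List V) : Prop :=
  l.Chain' E ∧ l.head? = some u ∧ l.getLast? = some v

/-- The internal vertices of a path given as a vertex list. -/
def internalsL (l : List V) : List V := (l.drop 1).dropLast

/-- The edges of a path given as a vertex list. -/
def edgesOfL (l : List V) : List (V × V) := l.zip l.tail

/-- There exist two internally vertex-disjoint (simple, distinct) paths from `u` to `v`. -/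
def TwoVPaths (E : V → V → Prop) (u v : V) : Prop :=
  ∃ l₁ l₂ : List V, IsPathList E u v l₁ ∧ IsPathList E u v l₂ ∧
    l₁.Nodup ∧ l₂.Nodup ∧ l₁ ≠ l₂ ∧ ∀ x ∈ internalsL l₁, x ∉ internalsL l₂

/-- `u` and `v` are 2-vertex-connected. -/
def TwoVConn (E : V → V → Prop) (u v : V) : Prop :=
  u ≠ v ∧ TwoVPaths E u v ∧ TwoVPaths E v u

/-- There exist two edge-disjoint paths from `u` to `v`. -/
def TwoEPaths (E : V → V → Prop) (u v : V) : Prop :=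
  ∃ l₁ l₂ : List V, IsPathList E u v l₁ ∧ IsPathList E u v l₂ ∧
    ∀ e ∈ edgesOfL l₁, e ∉ edgesOfL l₂

/-- `u` and `v` are 2-edge-connected. -/
def TwoEConn (E : V → V → Prop) (u v : V) : Prop :=
  u ≠ v ∧ TwoEPaths E u v ∧ TwoEPaths E v u

/-- A 2-vertex-connected block. -/
def Is2VBlock (E : V → V → Prop) (B : Set V) : Prop :=
  B.Pairwise (TwoVConn E) ∧ (∃ a ∈ B, ∃ b ∈ B, a ≠ b) ∧
    ∀ B' : Set V, B ⊆ B' → B'.Pairwise (TwoVConn E) → B' = B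

/-- A 2-edge-connected block. -/
def Is2EBlock (E : V → V → Prop) (B : Set V) : Prop :=
  B.Pairwise (TwoEConn E) ∧ (∃ a ∈ B, ∃ b ∈ B, a ≠ b) ∧
    ∀ B' : Set V, B ⊆ B' → B'.Pairwise (TwoEConn E) → B' = B

/-- The digraph `E` is strongly connected. -/
def StronglyConn (E : V → V → Prop) : Prop :=
  ∀ u v, Relation.ReflTransGen E u v

/-- `(a,b)` is a strong bridge of the strongly connected digraph `E`. -/
def IsStrongBridge (E : V → V → Prop) (a b : V) : Prop :=
  E a b ∧ ¬ StronglyConn (delE E a b)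

/-- `u` dominates `w` in the flow graph with start vertex `s`:
every path from `s` to `w` contains `u`. -/
def DomOf (E : V → V → Prop) (s u w : V) : Prop :=
  ∀ l : List V, IsPathList E s w l → u ∈ l

/-- `d` is the immediate dominator of `w` in the flow graph with start `s`:
the proper dominator of `w` dominated by all proper dominators of `w`. -/
def IdomOf (E : V → V → Prop) (s d w : V) : Prop :=
  d ≠ w ∧ DomOf E s d w ∧ ∀ u, u ≠ w → DomOf E s u w → DomOf E s u d

/-- The block graph `F` of the digraph `E`: the bipartite undirected graph on the
vertices of `E` together with its vertex-resilient blocks, a vertex `u` being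
adjacent to a block node `B` exactly when `u ∈ B`. -/
def blockGraph (E : V → V → Prop) :
    SimpleGraph (V ⊕ {B : Set V // IsVRBlock E B}) where
  Adj a b := ∃ u B, u ∈ B.1 ∧
    ((a = Sum.inl u ∧ b = Sum.inr B) ∨ (a = Sum.inr B ∧ b = Sum.inl u))
  symm := by
    constructor
    rintro a b ⟨u, B, hm, (⟨rfl, rfl⟩ | ⟨rfl, rfl⟩)⟩
    · exact ⟨u, B, hm, Or.inr ⟨rfl, rfl⟩⟩
    · exact ⟨u, B, hm, Or.inl ⟨rfl, rfl⟩⟩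
  loopless := by
    constructor
    rintro a ⟨u, B, hm, (⟨rfl, h⟩ | ⟨rfl, h⟩)⟩ <;> simp at h


lemma SConn.trans' {E : V → V → Prop} {a b c : V} (h1 : SConn E a b) (h2 : SConn E b c) :
    SConn E a c :=
  ⟨h1.1.trans h2.1, h2.2.trans h1.2⟩

lemma SConn.symm' {E : V → V → Prop} {a b : V} (h : SConn E a b) : SConn E b a :=
  ⟨h.2, h.1⟩

/-- if `u,v,x,y` are four distinct vertices with `u↔vr x`, `v↔vr x`,
`u↔vr y`, `v↔vr y`, then `x↔vr y` and `u↔vr v`. -/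
theorem stmt0 (E : V → V → Prop) (u v x y : V)
    (huv : u ≠ v) (hux : u ≠ x) (huy : u ≠ y) (hvx : v ≠ x) (hvy : v ≠ y)
    (hxy : x ≠ y)
    (h1 : VRes E u x) (h2 : VRes E v x) (h3 : VRes E u y) (h4 : VRes E v y) :
    VRes E x y ∧ VRes E u v := by
  constructor
  · refine ⟨hxy, fun w hwx hwy => ?_⟩
    by_cases hwu : w = u
    · subst hwu
      exact ((h2.2 w huv hwx).symm').trans' (h4.2 w huv hwy)
    · exact ((h1.2 w hwu hwx).symm').trans' (h3.2 w hwu hwy)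
  · refine ⟨huv, fun w hwu hwv => ?_⟩
    by_cases hwx : w = x
    · subst hwx
      exact (h3.2 w hwu hxy).trans' ((h4.2 w hwv hxy).symm')
    · exact (h1.2 w hwu hwx).trans' ((h2.2 w hwv hwx).symm')
end

section
/- Let B and B' be two distinct vertex-resilient blocks of a directed graph G. Then |B ∩ B'| ≤ 1. -/
variable {V : Type*}

/-- two distinct vertex-resilient blocks share at most one vertex. -/
theorem stmt1 (E : V → V → Prop) (B B' : Set V)
    (hB : IsVRBlock E B) (hB' : IsVRBlock E B') (hne : B ≠ B') :
    (B ∩ B').ncard ≤ 1 := by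
  by_contra h
  push_neg at h
  have hfin : (B ∩ B').Finite := by
    by_contra hinf
    rw [Set.Infinite.ncard hinf] at h; omega
  obtain ⟨a, b, ha, hb, hab⟩ := (Set.one_lt_ncard_iff hfin).mp h
  obtain ⟨hBp, hBne, hBmax⟩ := hB
  obtain ⟨hB'p, hB'ne, hB'max⟩ := hB'
  have key : (B ∪ B').Pairwise (VRes E) := by
    have main : ∀ x ∈ B, ∀ y ∈ B', x ∉ B' → y ∉ B → x ≠ y → VRes E x y := by
      intro x hx y hy hxB' hyB hxy
      refine ⟨hxy, fun w hwx hwy => ?_⟩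
      have hxa : x ≠ a := fun h => hxB' (h ▸ ha.2)
      have hxb : x ≠ b := fun h => hxB' (h ▸ hb.2)
      have hya : y ≠ a := fun h => hyB (h ▸ ha.1)
      have hyb : y ≠ b := fun h => hyB (h ▸ hb.1)
      obtain ⟨c, hcB, hcB', hcw, hcx, hcy⟩ :
          ∃ c, c ∈ B ∧ c ∈ B' ∧ w ≠ c ∧ x ≠ c ∧ y ≠ c := by
        by_cases hwa : w = a
        · exact ⟨b, hb.1, hb.2, hwa ▸ hab, hxb, hyb⟩
        · exact ⟨a, ha.1, ha.2, hwa, hxa, hya⟩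
      have h1 : SConn (delV E w) x c :=
        (hBp hx hcB hcx).2 w hwx hcw
      have h2 : SConn (delV E w) c y :=
        (hB'p hcB' hy (Ne.symm hcy)).2 w hcw hwy
      exact ⟨h1.1.trans h2.1, h2.2.trans h1.2⟩
    have symm : ∀ {x y}, VRes E x y → VRes E y x := by
      rintro x y ⟨hxy, hsc⟩
      exact ⟨hxy.symm, fun w h1 h2 => ⟨((hsc w h2 h1).2), ((hsc w h2 h1).1)⟩⟩
    intro x hx y hy hxy
    rcases hx with hx | hx <;> rcases hy with hy | hy
    · exact hBp hx hy hxy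
    · by_cases hxB' : x ∈ B'
      · exact hB'p hxB' hy hxy
      · by_cases hyB : y ∈ B
        · exact hBp hx hyB hxy
        · exact main x hx y hy hxB' hyB hxy
    · by_cases hyB' : y ∈ B'
      · exact hB'p hx hyB' hxy
      · by_cases hxB : x ∈ B
        · exact hBp hxB hy hxy
        · exact symm (main y hy x hx hyB' hxB hxy.symm)
    · exact hB'p hx hy hxy
  have e1 := hBmax (B ∪ B') Set.subset_union_left key
  have e2 := hB'max (B ∪ B') Set.subset_union_right key
  exact hne (e1.symm.trans e2)
end

section
/- Let F be the block graph of a digraph G: the bipartite undirected graph whose vertices are the vertices of G plus one node for each vertex-resilient block, with an edge {u,B} whenever vertex u belongs to block B. If u and v are vertices of G connected by a path P in F, then for any vertex w of G not lying on P, u and v are strongly connected in G \ w. -/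
variable {V : Type*}

lemma SConn.refl' (E : V → V → Prop) (u : V) : SConn E u u :=
  ⟨Relation.ReflTransGen.refl, Relation.ReflTransGen.refl⟩

lemma stmt2_aux (E : V → V → Prop) (w : V) :
    ∀ {x y : V ⊕ {B : Set V // IsVRBlock E B}} (P : (blockGraph E).Walk x y),
      Sum.inl w ∉ P.support → ∀ v, y = Sum.inl v →
        (∀ u, x = Sum.inl u → SConn (delV E w) u v) ∧
        (∀ B : {B : Set V // IsVRBlock E B}, x = Sum.inr B →
          ∀ u ∈ B.1, u ≠ w → SConn (delV E w) u v) := by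
  intro x y P
  induction P with
  | nil =>
    intro _ v hv
    subst hv
    constructor
    · rintro u hu
      injection hu with h
      subst h
      exact SConn.refl' _ _
    · rintro B hB
      simp at hB
  | @cons x b y h P ih =>
    intro hw v hv
    rw [SimpleGraph.Walk.support_cons] at hw
    have hwx : Sum.inl w ≠ x := fun he => hw (he ▸ List.mem_cons_self)
    have hwP : Sum.inl w ∉ P.support := fun he => hw (List.mem_cons_of_mem _ he)
    obtain ⟨ih1, ih2⟩ := ih hwP v hv
    constructor
    · rintro u rfl
      obtain ⟨u', B, hm, (⟨hx, hb⟩ | ⟨hx, hb⟩)⟩ := h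
      · simp only [Sum.inl.injEq] at hx
        subst hx
        exact ih2 B hb u hm (fun he => hwx (by rw [he]))
      · simp at hx
    · rintro B rfl u hu hune
      obtain ⟨a, B', hm, (⟨hx, hb⟩ | ⟨hx, hb⟩)⟩ := h
      · simp at hx
      · simp only [Sum.inr.injEq] at hx
        subst hx
        have hav : SConn (delV E w) a v := ih1 a hb
        have hwa : w ≠ a := by
          intro he
          have hmem : Sum.inl a ∈ P.support := hb ▸ P.start_mem_support
          exact hwP (he ▸ hmem)
        rcases eq_or_ne u a with rfl | hua
        · exact hav
        · have hres : VRes E u a := B.2.1 hu hm hua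
          exact SConn.trans' (hres.2 w (Ne.symm hune) hwa) hav

/-- if `u` and `v` are connected by a path `P` in the block graph `F`,
then for any vertex `w` of `G` not on `P`, `u` and `v` are strongly connected in `G \ w`. -/
theorem stmt2 (E : V → V → Prop) (u v : V)
    (P : (blockGraph E).Walk (Sum.inl u) (Sum.inl v)) (hP : P.IsPath)
    (w : V) (hw : Sum.inl w ∉ P.support) :
    SConn (delV E w) u v :=
  (stmt2_aux E w P hw v rfl).1 u rfl
end

section
/- A directed graph G on n ≥ 1 vertices has at most n − 1 vertex-resilient blocks. -/
variable {V : Type*}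

lemma sconn_refl (F : V → V → Prop) (u : V) : SConn F u u :=
  ⟨Relation.ReflTransGen.refl, Relation.ReflTransGen.refl⟩

lemma sconn_symm {F : V → V → Prop} {u v : V} (h : SConn F u v) : SConn F v u :=
  ⟨h.2, h.1⟩

lemma sconn_trans {F : V → V → Prop} {u v x : V} (h : SConn F u v) (h' : SConn F v x) :
    SConn F u x := ⟨h.1.trans h'.1, h'.2.trans h.2⟩

lemma vres_symm {E : V → V → Prop} {u v : V} (h : VRes E u v) : VRes E v u :=
  ⟨h.1.symm, fun w hw1 hw2 => sconn_symm (h.2 w hw2 hw1)⟩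

lemma chain_sconn_head {E : V → V → Prop} {w : V} :
    ∀ (l : List V), l.Chain' (VRes E) → w ∉ l → ∀ a, l.head? = some a →
      ∀ z ∈ l, SConn (delV E w) a z := by
  intro l
  induction l with
  | nil => intro _ _ a ha; simp at ha
  | cons b t ih =>
    intro hch hw a ha z hz
    simp only [List.head?_cons, Option.some.injEq] at ha
    subst ha
    rcases List.mem_cons.mp hz with rfl | hzt
    · exact sconn_refl _ _
    · match t, hzt with
      | c :: t', hzt =>
        have hbc : VRes E b c := (List.isChain_cons_cons.mp hch).1
        have h1 : SConn (delV E w) b c := by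
          refine hbc.2 w ?_ ?_
          · intro h; exact hw (h ▸ List.mem_cons_self)
          · intro h; exact hw (h ▸ List.mem_cons_of_mem _ (List.mem_cons_self))
        have h2 : SConn (delV E w) c z :=
          ih (List.isChain_cons_cons.mp hch).2 (fun hc => hw (List.mem_cons_of_mem _ hc)) c rfl z hzt
        exact sconn_trans h1 h2

lemma chain_sconn {E : V → V → Prop} {w : V} {l : List V} (hch : l.Chain' (VRes E))
    (hw : w ∉ l) {x y : V} (hx : x ∈ l) (hy : y ∈ l) : SConn (delV E w) x y := by
  match l, hx with
  | a :: t, hx =>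
    have h1 := chain_sconn_head (a :: t) hch hw a rfl x hx
    have h2 := chain_sconn_head (a :: t) hch hw a rfl y hy
    exact sconn_trans (sconn_symm h1) h2

/-- Cycle lemma: the vertices of a VRes-cycle are pairwise vertex-resilient. -/
lemma cycle_clique {E : V → V → Prop} {l : List V} (hnd : l.Nodup)
    (hch : l.Chain' (VRes E))
    (hcyc : ∀ a b, l.getLast? = some a → l.head? = some b → VRes E a b) :
    ∀ x ∈ l, ∀ y ∈ l, x ≠ y → VRes E x y := by
  intro x hx y hy hxy
  refine ⟨hxy, fun w hwx hwy => ?_⟩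
  by_cases hwl : w ∈ l
  · obtain ⟨l₁, l₂, rfl⟩ := List.append_of_mem hwl
    unfold List.Chain' at hch; rw [List.isChain_append] at hch
    obtain ⟨c1, c2, _⟩ := hch
    have c2' : l₂.Chain' (VRes E) := c2.tail
    have hnd' := hnd
    rw [List.nodup_append] at hnd'
    have hw1 : w ∉ l₁ := fun h => hnd'.2.2 w h w (List.mem_cons_self) rfl
    have hw2 : w ∉ l₂ := (List.nodup_cons.mp hnd'.2.1).1
    have hch' : (l₂ ++ l₁).Chain' (VRes E) := by
      unfold List.Chain'; rw [List.isChain_append]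
      refine ⟨c2', c1, ?_⟩
      intro a ha b hb
      have hl₂ : l₂ ≠ [] := by rintro rfl; simp at ha
      have hl₁ : l₁ ≠ [] := by rintro rfl; simp at hb
      refine hcyc a b ?_ ?_
      · rw [List.getLast?_append_of_ne_nil _ (by simp : w :: l₂ ≠ []),
          show w :: l₂ = [w] ++ l₂ from rfl, List.getLast?_append_of_ne_nil _ hl₂]
        exact ha
      · rw [List.head?_append_of_ne_nil _ hl₁]; exact hb
    have hw' : w ∉ l₂ ++ l₁ := by
      simp only [List.mem_append]; rintro (h | h); exacts [hw2 h, hw1 h]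
    have hmem : ∀ z, z ∈ l₁ ++ w :: l₂ → z ≠ w → z ∈ l₂ ++ l₁ := by
      intro z hz hzw
      simp only [List.mem_append, List.mem_cons] at hz ⊢
      rcases hz with h | rfl | h
      · exact Or.inr h
      · exact absurd rfl hzw
      · exact Or.inl h
    exact chain_sconn hch' hw' (hmem x hx hwx.symm) (hmem y hy hwy.symm)
  · exact chain_sconn hch hwl hx hy


/-- Maximal clique of the vertex-resilience relation, relative to a vertex set `U`. -/
def MC (E : V → V → Prop) (U K : Set V) : Prop :=
  K ⊆ U ∧ K.Pairwise (VRes E) ∧ (∃ a ∈ K, ∃ b ∈ K, a ≠ b) ∧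
    ∀ K', K ⊆ K' → K' ⊆ U → K'.Pairwise (VRes E) → K' = K

/-- any clique with two elements extends to a maximal clique. -/
lemma exists_mc {E : V → V → Prop} {U Q : Set V} (hU : U.Finite) (hQU : Q ⊆ U)
    (hp : Q.Pairwise (VRes E)) (h2 : ∃ a ∈ Q, ∃ b ∈ Q, a ≠ b) :
    ∃ K, MC E U K ∧ Q ⊆ K := by
  have hfin : {K | Q ⊆ K ∧ K ⊆ U ∧ K.Pairwise (VRes E)}.Finite :=
    hU.finite_subsets.subset (fun K hK => hK.2.1)
  obtain ⟨K, hK, hmax⟩ := Set.exists_max_image _ Set.ncard hfin ⟨Q, Set.Subset.rfl, hQU, hp⟩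
  obtain ⟨hQK, hKU, hKp⟩ := hK
  refine ⟨K, ⟨hKU, hKp, ?_, ?_⟩, hQK⟩
  · obtain ⟨a, ha, b, hb, hab⟩ := h2
    exact ⟨a, hQK ha, b, hQK hb, hab⟩
  · intro K' hKK' hK'U hK'p
    exact (Set.eq_of_subset_of_ncard_le hKK'
      (hmax K' ⟨hQK.trans hKK', hK'U, hK'p⟩) (hU.subset hK'U)).symm

lemma pair_union {E : V → V → Prop} {U K K' : Set V} (hK : MC E U K) (hK' : MC E U K')
    {u v : V} (hu : u ∈ K ∩ K') (hv : v ∈ K ∩ K') (huv : u ≠ v) :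
    (K ∪ K').Pairwise (VRes E) := by
  have key : ∀ a ∈ K, ∀ b ∈ K', a ≠ b → VRes E a b := by
    intro a ha b hb hab
    by_cases haK' : a ∈ K'
    · exact hK'.2.1 haK' hb hab
    by_cases hbK : b ∈ K
    · exact hK.2.1 ha hbK hab
    -- a ∈ K \ K', b ∈ K' \ K; u,v ∈ K ∩ K'
    have hau : a ≠ u := fun h => haK' (h ▸ hu.2)
    have hav : a ≠ v := fun h => haK' (h ▸ hv.2)
    have hbu : b ≠ u := fun h => hbK (h ▸ hu.1)
    have hbv : b ≠ v := fun h => hbK (h ▸ hv.1)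
    have hnd : ([a, u, b, v] : List V).Nodup := by
      simp [hau, hab, hav, hbu.symm, huv, hbv]
    have hch : ([a, u, b, v] : List V).Chain' (VRes E) := by
      refine List.isChain_cons_cons.mpr ⟨hK.2.1 ha hu.1 hau, ?_⟩
      refine List.isChain_cons_cons.mpr ⟨hK'.2.1 hu.2 hb hbu.symm, ?_⟩
      refine List.isChain_cons_cons.mpr ⟨hK'.2.1 hb hv.2 hbv, ?_⟩
      simp
    have hcyc : ∀ x y, ([a, u, b, v] : List V).getLast? = some x →
        ([a, u, b, v] : List V).head? = some y → VRes E x y := by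
      intro x y hx hy
      simp only [List.getLast?_cons_cons, List.getLast?_singleton, List.head?_cons,
        Option.some.injEq] at hx hy
      subst hx; subst hy
      exact hK.2.1 hv.1 ha hav.symm
    have := cycle_clique hnd hch hcyc a (by simp) b (by simp) hab
    exact this
  intro a ha b hb hab
  rcases ha with ha | ha <;> rcases hb with hb | hb
  · exact hK.2.1 ha hb hab
  · exact key a ha b hb hab
  · exact vres_symm (key b hb a ha hab.symm)
  · exact hK'.2.1 ha hb hab

lemma inter_subsingleton {E : V → V → Prop} {U K K' : Set V} (hK : MC E U K)
    (hK' : MC E U K') (hne : K ≠ K') : (K ∩ K').Subsingleton := by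
  intro u hu v hv
  by_contra huv
  have hp := pair_union hK hK' hu hv huv
  have h1 := hK.2.2.2 (K ∪ K') Set.subset_union_left
    (Set.union_subset hK.1 hK'.1) hp
  have h2 := hK'.2.2.2 (K ∪ K') Set.subset_union_right
    (Set.union_subset hK.1 hK'.1) hp
  exact hne (h1.symm.trans h2)


/-- No cycles in the clique structure. -/
lemma no_clique_cycle {E : V → V → Prop} {U : Set V} (r : ℕ) (hr : 1 ≤ r)
    (L : ℕ → Set V) (d : ℕ → V)
    (hL : ∀ i ≤ r, MC E U (L i))
    (hIL : ∀ i ≤ r, ∀ j ≤ r, L i = L j → i = j)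
    (hId : ∀ i ≤ r, ∀ j ≤ r, d i = d j → i = j)
    (hd1 : ∀ i ≤ r, d i ∈ L i) (hd2 : ∀ i, i < r → d i ∈ L (i+1))
    (hdr : d r ∈ L 0) : False := by
  have hLne : ∀ i j, i ≤ r → j ≤ r → i ≠ j → L i ≠ L j :=
    fun i j hi hj hij h => hij (hIL i hi j hj h)
  have hdne : ∀ i j, i ≤ r → j ≤ r → i ≠ j → d i ≠ d j :=
    fun i j hi hj hij h => hij (hId i hi j hj h)
  rcases eq_or_lt_of_le hr with heq | hr2
  · -- r = 1
    subst heq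
    have := inter_subsingleton (hL 0 (by omega)) (hL 1 (by omega))
      (hLne 0 1 (by omega) (by omega) (by omega))
      ⟨hd1 0 (by omega), hd2 0 (by omega)⟩ ⟨hdr, hd1 1 (by omega)⟩
    exact hdne 0 1 (by omega) (by omega) (by omega) this
  · -- 2 ≤ r
    have h2r : 2 ≤ r := hr2
    set dl : List V := (List.range (r + 1)).map d with hdl
    have hmem : ∀ i, i ≤ r → d i ∈ dl := by
      intro i hi
      exact List.mem_map_of_mem (f := d) (List.mem_range.mpr (by omega))
    have hnd : dl.Nodup := by
      refine List.Nodup.map_on ?_ List.nodup_range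
      intro i hi j hj h
      rw [List.mem_range] at hi hj
      exact hId i (by omega) j (by omega) h
    have hch : dl.Chain' (VRes E) := by
      rw [hdl]; unfold List.Chain'; rw [List.isChain_map]
      rw [show r + 1 = Nat.succ r from rfl, List.isChain_range_succ]
      intro m hm
      exact (hL (m+1) (by omega)).2.1 (hd2 m hm) (hd1 (m+1) (by omega))
        (hdne m (m+1) (by omega) (by omega) (by omega))
    have hlast : dl.getLast? = some (d r) := by
      rw [hdl, List.range_succ, List.map_append]
      simp
    have hhead : dl.head? = some (d 0) := by
      rw [hdl, List.range_succ_eq_map]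
      simp
    have hclique : ∀ x ∈ dl, ∀ y ∈ dl, x ≠ y → VRes E x y := by
      refine cycle_clique hnd hch ?_
      intro a b ha hb
      rw [hlast, Option.some_inj] at ha
      rw [hhead, Option.some_inj] at hb
      subst ha; subst hb
      exact (hL 0 (by omega)).2.1 hdr (hd1 0 (by omega))
        (hdne r 0 (le_refl r) (by omega) (by omega))
    -- d 2 ∉ L 1
    have hd2L1 : d 2 ∉ L 1 := by
      intro h
      have := inter_subsingleton (hL 1 (by omega)) (hL 2 (by omega))
        (hLne 1 2 (by omega) (by omega) (by omega))
        ⟨hd1 1 (by omega), hd2 1 (by omega)⟩ ⟨h, hd1 2 (by omega)⟩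
      exact hdne 1 2 (by omega) (by omega) (by omega) this
    -- L 1 ∪ {d 2} is a clique
    have hnew : (L 1 ∪ {d 2}).Pairwise (VRes E) := by
      have key : ∀ a ∈ L 1, a ≠ d 2 → VRes E a (d 2) := by
        intro a ha hane
        by_cases h0 : a = d 0
        · exact hclique a (h0 ▸ hmem 0 (by omega)) (d 2) (hmem 2 (by omega)) hane
        by_cases h1 : a = d 1
        · exact hclique a (h1 ▸ hmem 1 (by omega)) (d 2) (hmem 2 (by omega)) hane
        -- 4-cycle [a, d 0, d 2, d 1]
        have hnd4 : ([a, d 0, d 2, d 1] : List V).Nodup := by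
          have h02 := hdne 0 2 (by omega) (by omega) (by omega)
          have h01 := hdne 0 1 (by omega) (by omega) (by omega)
          have h21 := hdne 2 1 (by omega) (by omega) (by omega)
          simp only [List.nodup_cons, List.mem_cons, List.mem_singleton,
            List.not_mem_nil, or_false, List.nodup_nil, and_true, not_or]
          tauto
        have hch4 : ([a, d 0, d 2, d 1] : List V).Chain' (VRes E) := by
          refine List.isChain_cons_cons.mpr ⟨?_, ?_⟩
          · exact (hL 1 (by omega)).2.1 ha (hd2 0 (by omega)) h0
          refine List.isChain_cons_cons.mpr ⟨?_, ?_⟩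
          · exact hclique (d 0) (hmem 0 (by omega)) (d 2) (hmem 2 (by omega))
              (hdne 0 2 (by omega) (by omega) (by omega))
          refine List.isChain_cons_cons.mpr ⟨?_, ?_⟩
          · exact hclique (d 2) (hmem 2 (by omega)) (d 1) (hmem 1 (by omega))
              (hdne 2 1 (by omega) (by omega) (by omega))
          · simp
        have hcyc4 : ∀ x y, ([a, d 0, d 2, d 1] : List V).getLast? = some x →
            ([a, d 0, d 2, d 1] : List V).head? = some y → VRes E x y := by
          intro x y hx hy
          simp only [List.getLast?_cons_cons, List.getLast?_singleton, List.head?_cons,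
            Option.some.injEq] at hx hy
          subst hx; subst hy
          exact (hL 1 (by omega)).2.1 (hd1 1 (by omega)) ha (Ne.symm h1)
        exact cycle_clique hnd4 hch4 hcyc4 a (by simp) (d 2) (by simp) hane
      intro a ha b hb hab
      rcases ha with ha | ha <;> rcases hb with hb | hb
      · exact (hL 1 (by omega)).2.1 ha hb hab
      · exact (Set.mem_singleton_iff.mp hb) ▸ key a ha (hb ▸ hab)
      · exact vres_symm ((Set.mem_singleton_iff.mp ha) ▸ key b hb (ha ▸ hab.symm))
      · exact absurd (hb ▸ Set.mem_singleton_iff.mp ha) hab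
    have := (hL 1 (by omega)).2.2.2 (L 1 ∪ {d 2}) Set.subset_union_left
      (Set.union_subset (hL 1 (by omega)).1
        (Set.singleton_subset_iff.mpr ((hL 2 (by omega)).1 (hd1 2 (by omega))))) hnew
    exact hd2L1 (this ▸ (Set.mem_union_right _ rfl : d 2 ∈ L 1 ∪ {d 2}))


/-- A simple path in the clique structure. -/
def SPath (E : V → V → Prop) (U : Set V) (m : ℕ) (L : ℕ → Set V) (d : ℕ → V) : Prop :=
  (∀ i ≤ m, MC E U (L i)) ∧ (∀ i ≤ m, ∀ j ≤ m, L i = L j → i = j) ∧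
  (∀ i < m, ∀ j, j < m → d i = d j → i = j) ∧ (∀ i < m, d i ∈ L i ∧ d i ∈ L (i+1))

lemma spath_extend {E : V → V → Prop} {U : Set V}
    (hcon : ∀ K c, MC E U K → c ∈ K → ∃ M x, MC E U M ∧ M ≠ K ∧ x ∈ M ∧ x ∈ K ∧ x ≠ c)
    (m : ℕ) (L : ℕ → Set V) (d : ℕ → V) (hp : SPath E U m L d)
    (c : V) (hc : c ∈ L m) (hcl : m = 0 ∨ ∃ s, s + 1 = m ∧ c = d s) :
    ∃ L' d', SPath E U (m + 1) L' d' := by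
  obtain ⟨hL, hIL, hId, hd⟩ := hp
  obtain ⟨M, x, hM, hMne, hxM, hxL, hxc⟩ := hcon (L m) c (hL m le_rfl) hc
  by_cases hA : ∃ s, s < m ∧ x = d s
  · exfalso
    obtain ⟨s, hs, rfl⟩ := hA
    have hsm : s + 1 < m := by
      rcases Nat.lt_or_ge (s+1) m with h | h
      · exact h
      · exfalso
        have : s + 1 = m := by omega
        rcases hcl with h0 | ⟨s', hs', hcs⟩
        · omega
        · have : s' = s := by omega
          exact hxc (by rw [hcs, this])
    set r := m - s - 1 with hrdef
    refine no_clique_cycle (E := E) (U := U) r (by omega)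
      (fun i => L (s + 1 + i)) (fun i => if i = r then d s else d (s + 1 + i))
      ?_ ?_ ?_ ?_ ?_ ?_
    · intro i hi; exact hL _ (by omega)
    · intro i hi j hj h
      have := hIL (s+1+i) (by omega) (s+1+j) (by omega) h
      omega
    · intro i hi j hj h
      by_cases hir : i = r <;> by_cases hjr : j = r
      · omega
      · simp only [hir, if_pos rfl, if_neg hjr] at h
        have := hId s hs (s+1+j) (by omega) h
        omega
      · simp only [hjr, if_neg hir, if_pos rfl] at h
        have := hId (s+1+i) (by omega) s hs h
        omega
      · simp only [if_neg hir, if_neg hjr] at h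
        have := hId (s+1+i) (by omega) (s+1+j) (by omega) h
        omega
    · intro i hi
      beta_reduce
      by_cases hir : i = r
      · rw [if_pos hir, hir, show s + 1 + r = m by omega]
        exact hxL
      · rw [if_neg hir]
        exact (hd (s+1+i) (by omega)).1
    · intro i hi
      beta_reduce
      rw [if_neg (by omega : ¬ i = r)]
      exact (hd (s+1+i) (by omega)).2
    · beta_reduce
      rw [if_pos rfl, show s + 1 + 0 = s + 1 from rfl]
      exact (hd s hs).2
  · by_cases hB : ∃ t, t ≤ m ∧ M = L t
    · exfalso
      obtain ⟨t, ht, rfl⟩ := hB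
      have htm : t < m := by
        rcases Nat.lt_or_ge t m with h | h
        · exact h
        · exact absurd (by omega : t = m) (fun hh => hMne (by rw [hh]))
      set r := m - t with hrdef
      refine no_clique_cycle (E := E) (U := U) r (by omega)
        (fun i => L (t + i)) (fun i => if i = r then x else d (t + i))
        ?_ ?_ ?_ ?_ ?_ ?_
      · intro i hi; exact hL _ (by omega)
      · intro i hi j hj h
        have := hIL (t+i) (by omega) (t+j) (by omega) h
        omega
      · intro i hi j hj h
        by_cases hir : i = r <;> by_cases hjr : j = r
        · omega
        · simp only [hir, if_pos rfl, if_neg hjr] at h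
          exact absurd ⟨t+j, by omega, h⟩ hA
        · simp only [hjr, if_neg hir, if_pos rfl] at h
          exact absurd ⟨t+i, by omega, h.symm⟩ hA
        · simp only [if_neg hir, if_neg hjr] at h
          have := hId (t+i) (by omega) (t+j) (by omega) h
          omega
      · intro i hi
        beta_reduce
        by_cases hir : i = r
        · rw [if_pos hir, hir, show t + r = m by omega]
          exact hxL
        · rw [if_neg hir]
          exact (hd (t+i) (by omega)).1
      · intro i hi
        beta_reduce
        rw [if_neg (by omega : ¬ i = r)]
        exact (hd (t+i) (by omega)).2
      · beta_reduce
        rw [if_pos rfl, show t + 0 = t from rfl]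
        exact hxM
    · refine ⟨fun i => if i = m + 1 then M else L i, fun i => if i = m then x else d i,
        ?_, ?_, ?_, ?_⟩
      · intro i hi
        beta_reduce
        by_cases h : i = m + 1
        · rw [if_pos h]; exact hM
        · rw [if_neg h]; exact hL i (by omega)
      · intro i hi j hj h
        beta_reduce at h
        by_cases h1 : i = m + 1 <;> by_cases h2 : j = m + 1
        · omega
        · rw [if_pos h1, if_neg h2] at h
          exact absurd ⟨j, by omega, h⟩ hB
        · rw [if_neg h1, if_pos h2] at h
          exact absurd ⟨i, by omega, h.symm⟩ hB
        · rw [if_neg h1, if_neg h2] at h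
          exact hIL i (by omega) j (by omega) h
      · intro i hi j hj h
        beta_reduce at h
        by_cases h1 : i = m <;> by_cases h2 : j = m
        · omega
        · rw [if_pos h1, if_neg h2] at h
          exact absurd ⟨j, by omega, h⟩ hA
        · rw [if_neg h1, if_pos h2] at h
          exact absurd ⟨i, by omega, h.symm⟩ hA
        · rw [if_neg h1, if_neg h2] at h
          exact hId i (by omega) j (by omega) h
      · intro i hi
        beta_reduce
        by_cases h1 : i = m
        · subst h1
          rw [if_pos rfl, if_neg (by omega : ¬ i = i + 1), if_pos rfl]
          exact ⟨hxL, hxM⟩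
        · rw [if_neg h1, if_neg (by omega : ¬ i = m + 1), if_neg (by omega : ¬ i + 1 = m + 1)]
          exact hd i (by omega)

lemma exists_leaf {E : V → V → Prop} {U : Set V} (hU : U.Finite)
    (hne : ∃ K, MC E U K) :
    ∃ K c, MC E U K ∧ c ∈ K ∧ ∀ M, MC E U M → M ≠ K → M ∩ K ⊆ {c} := by
  by_contra hcon
  push_neg at hcon
  have hcon' : ∀ K c, MC E U K → c ∈ K →
      ∃ M x, MC E U M ∧ M ≠ K ∧ x ∈ M ∧ x ∈ K ∧ x ≠ c := by
    intro K c hK hc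
    obtain ⟨M, hM, hMne, hns⟩ := hcon K c hK hc
    rw [Set.not_subset] at hns
    obtain ⟨x, hx, hxc⟩ := hns
    exact ⟨M, x, hM, hMne, hx.1, hx.2, hxc⟩
  -- build arbitrarily long simple paths
  have hbuild : ∀ m, ∃ L d, SPath E U m L d := by
    intro m
    induction m with
    | zero =>
      obtain ⟨K, hK⟩ := hne
      obtain ⟨a, ha, -⟩ := hK.2.2.1
      refine ⟨fun _ => K, fun _ => a, fun i _ => hK, fun i hi j hj _ => by omega,
        fun i hi => by omega, fun i hi => by omega⟩
    | succ m ih =>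
      obtain ⟨L, d, hp⟩ := ih
      rcases Nat.eq_zero_or_pos m with rfl | hm
      · obtain ⟨a, ha, -⟩ := (hp.1 0 le_rfl).2.2.1
        exact spath_extend hcon' 0 L d hp a ha (Or.inl rfl)
      · obtain ⟨s, rfl⟩ : ∃ s, s + 1 = m := ⟨m - 1, by omega⟩
        exact spath_extend hcon' (s+1) L d hp (d s)
          ((hp.2.2.2 s (by omega)).2) (Or.inr ⟨s, rfl, rfl⟩)
  -- derive a contradiction from cardinality
  have hSfin : {K | MC E U K}.Finite :=
    hU.finite_subsets.subset (fun K hK => hK.1)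
  set N := {K | MC E U K}.ncard with hN
  obtain ⟨L, d, hp⟩ := hbuild N
  haveI := hSfin.to_subtype
  have hinj : Function.Injective (fun i : Fin (N + 1) =>
      (⟨L i, hp.1 i (by omega)⟩ : {K | MC E U K})) := by
    intro i j h
    simp only [Subtype.mk.injEq] at h
    have := hp.2.1 i (by omega) j (by omega) h
    exact Fin.ext this
  have hcard := Nat.card_le_card_of_injective _ hinj
  rw [Nat.card_eq_fintype_card, Fintype.card_fin, Nat.card_coe_set_eq] at hcard
  omega


lemma count_mc (E : V → V → Prop) :
    ∀ (n : ℕ) (U : Set V), U.Finite → U.ncard ≤ n →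
      {K | MC E U K}.ncard ≤ U.ncard - 1 := by
  intro n
  induction n with
  | zero =>
    intro U hU hle
    have : U = ∅ := by
      rw [← Set.ncard_eq_zero hU]; omega
    subst this
    have : {K : Set V | MC E ∅ K} = ∅ := by
      ext K
      simp only [Set.mem_setOf_eq, Set.mem_empty_iff_false, iff_false]
      rintro ⟨hsub, -, ⟨a, ha, -⟩, -⟩
      exact hsub ha
    simp [this]
  | succ n ih =>
    intro U hU hle
    by_cases hS : {K | MC E U K} = ∅
    · simp [hS]
    · obtain ⟨K₀, hK₀mem⟩ := Set.nonempty_iff_ne_empty.mpr hS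
      obtain ⟨K₀, c, hK₀, hc, hleaf⟩ := exists_leaf hU ⟨K₀, hK₀mem⟩
      clear hK₀mem
      set U' := U \ (K₀ \ {c}) with hU'def
      have hU'sub : U' ⊆ U := Set.diff_subset
      have hU'fin : U'.Finite := hU.subset hU'sub
      have hKU : K₀ ⊆ U := hK₀.1
      have hKdsub : K₀ \ {c} ⊆ U := (Set.diff_subset).trans hKU
      -- K₀ \ {c} is nonempty
      obtain ⟨a, ha, b, hb, hab⟩ := hK₀.2.2.1
      have hKdne : (K₀ \ {c}).Nonempty := by
        by_cases hac : a = c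
        · exact ⟨b, hb, fun h => hab (hac ▸ h ▸ rfl)⟩
        · exact ⟨a, ha, hac⟩
      have hcU' : c ∈ U' := ⟨hKU hc, fun h => h.2 rfl⟩
      -- membership in U' characterization
      have hmemU' : ∀ x, x ∈ U → (x ∉ U' ↔ x ∈ K₀ ∧ x ≠ c) := by
        intro x hx
        constructor
        · intro h
          by_contra hcon
          apply h
          refine ⟨hx, fun hk => hcon ⟨hk.1, hk.2⟩⟩
        · rintro ⟨h1, h2⟩ hmem
          exact hmem.2 ⟨h1, h2⟩
      -- the set of maximal cliques of U' is S_U minus K₀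
      have hset : {K | MC E U' K} = {K | MC E U K} \ {K₀} := by
        ext Q
        simp only [Set.mem_setOf_eq, Set.mem_diff, Set.mem_singleton_iff]
        constructor
        · rintro ⟨hQU', hQp, hQ2, hQmax⟩
          have hQne : Q ≠ K₀ := by
            rintro rfl
            obtain ⟨z, hz⟩ := hKdne
            exact (hmemU' z (hKU hz.1)).mpr ⟨hz.1, hz.2⟩ (hQU' hz.1)
          refine ⟨⟨hQU'.trans hU'sub, hQp, hQ2, ?_⟩, hQne⟩
          intro Q' hQQ' hQ'U hQ'p
          -- key: Q' ⊆ U'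
          have hQ'U' : Q' ⊆ U' := by
            intro x hx
            by_contra hxU'
            obtain ⟨hxK₀, hxc⟩ := (hmemU' x (hQ'U hx)).mp hxU'
            -- pick q ∈ Q with q ≠ c
            obtain ⟨a', ha', b', hb', hab'⟩ := hQ2
            obtain ⟨q, hq, hqc⟩ : ∃ q ∈ Q, q ≠ c := by
              by_cases h : a' = c
              · exact ⟨b', hb', fun hh => hab' (h ▸ hh ▸ rfl)⟩
              · exact ⟨a', ha', h⟩
            have hqx : q ≠ x := by
              rintro rfl
              exact (hmemU' q (hQ'U (hQQ' hq))).mpr ⟨hxK₀, hxc⟩ (hQU' hq)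
            have hqxres : VRes E q x := hQ'p (hQQ' hq) hx hqx
            -- extend {q, x} to a maximal clique of U
            obtain ⟨M, hM, hQM⟩ := exists_mc (E := E) hU
              (Set.insert_subset (hQ'U (hQQ' hq)) (Set.singleton_subset_iff.mpr (hQ'U hx)))
              (Set.pairwise_pair.mpr (fun _ => ⟨hqxres, vres_symm hqxres⟩))
              ⟨q, Set.mem_insert _ _, x, Set.mem_insert_of_mem _ rfl, hqx⟩
            have hMne : M ≠ K₀ := by
              rintro rfl
              exact (hmemU' q (hQ'U (hQQ' hq))).mpr
                ⟨hQM (Set.mem_insert _ _), hqc⟩ (hQU' hq)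
            have : x ∈ M ∩ K₀ := ⟨hQM (Set.mem_insert_of_mem _ rfl), hxK₀⟩
            exact hxc (hleaf M hM hMne this)
          exact hQmax Q' hQQ' hQ'U' hQ'p
        · rintro ⟨⟨hQU, hQp, hQ2, hQmax⟩, hQne⟩
          have hQU' : Q ⊆ U' := by
            intro x hx
            by_contra hxU'
            obtain ⟨hxK₀, hxc⟩ := (hmemU' x (hQU hx)).mp hxU'
            have := hleaf Q ⟨hQU, hQp, hQ2, hQmax⟩ hQne ⟨hx, hxK₀⟩
            exact hxc this
          exact ⟨hQU', hQp, hQ2, fun K' h1 h2 h3 => hQmax K' h1 (h2.trans hU'sub) h3⟩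
      -- cardinalities
      have hSfin : {K | MC E U K}.Finite :=
        hU.finite_subsets.subset (fun K hK => hK.1)
      have hK₀S : K₀ ∈ {K | MC E U K} := hK₀
      have hcount : ({K | MC E U K} \ {K₀}).ncard + 1 = {K | MC E U K}.ncard :=
        Set.ncard_diff_singleton_add_one hK₀S hSfin
      have hU'card : U'.ncard = U.ncard - (K₀ \ {c}).ncard :=
        Set.ncard_diff hKdsub (hU.subset hKdsub)
      have hKd1 : 1 ≤ (K₀ \ {c}).ncard := (Set.ncard_pos (hU.subset hKdsub)).mpr hKdne
      have hKdle : (K₀ \ {c}).ncard ≤ U.ncard := Set.ncard_le_ncard hKdsub hU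
      have hcU'1 : 1 ≤ U'.ncard := (Set.ncard_pos hU'fin).mpr ⟨c, hcU'⟩
      have hih := ih U' hU'fin (by omega)
      rw [hset] at hih
      omega


/-- a digraph on `n ≥ 1` vertices has at most `n - 1` vertex-resilient blocks. -/
theorem stmt4 [Fintype V] (E : V → V → Prop) (hn : 1 ≤ Fintype.card V) :
    {B : Set V | IsVRBlock E B}.ncard ≤ Fintype.card V - 1 := by
  have hset : {B : Set V | IsVRBlock E B} = {K | MC E Set.univ K} := by
    ext B
    simp only [Set.mem_setOf_eq]
    constructor
    · rintro ⟨h1, h2, h3⟩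
      exact ⟨Set.subset_univ _, h1, h2, fun K' hs _ hp => h3 K' hs hp⟩
    · rintro ⟨-, h1, h2, h3⟩
      exact ⟨h1, h2, fun B' hs hp => h3 B' hs (Set.subset_univ _) hp⟩
  rw [hset]
  have := count_mc E (Set.univ : Set V).ncard Set.univ Set.finite_univ le_rfl
  rwa [Set.ncard_univ, Nat.card_eq_fintype_card] at this
end

section
/- For any two distinct vertices v and w of a strongly connected digraph G, v↔2v w if and only if v↔vr w and v↔2e w. -/
variable {V : Type*}

namespace Aux

open scoped Classical

variable {E : V → V → Prop} {u v w x y z : V}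

theorem edges_cons₂ {W : Type*} {a b : W} (l : List W) :
    edgesOfL (a :: b :: l) = (a, b) :: edgesOfL (b :: l) := rfl
theorem edges_subset_cons {W : Type*} {a : W} (l : List W) : edgesOfL l ⊆ edgesOfL (a :: l) := by
  cases l with
  | nil => simp [edgesOfL]
  | cons b l => rw [edges_cons₂]; exact List.subset_cons_self _ _
theorem chain'_iff_edges {W : Type*} {R : W → W → Prop} {l : List W} :
    l.Chain' R ↔ ∀ p ∈ edgesOfL l, R p.1 p.2 := by
  induction l with
  | nil => simp [edgesOfL, List.Chain']
  | cons a l ih =>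
    cases l with
    | nil => simp [edgesOfL, List.Chain']
    | cons b l =>
      simp only [List.Chain'] at ih ⊢
      rw [List.isChain_cons_cons, edges_cons₂, ih]
      constructor
      · rintro ⟨h1, h2⟩ p hp
        rcases List.mem_cons.1 hp with rfl | hp
        · exact h1
        · exact h2 p hp
      · intro h
        exact ⟨h (a, b) (List.mem_cons_self), fun p hp => h p (List.mem_cons_of_mem _ hp)⟩

theorem edges_prefix_subset {W : Type*} : ∀ (l r : List W), edgesOfL l ⊆ edgesOfL (l ++ r) := by
  intro l
  induction l with
  | nil => simp [edgesOfL]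
  | cons a t ih =>
    intro r
    cases t with
    | nil => simp [edgesOfL]
    | cons b t' =>
      intro p hp
      rw [edges_cons₂] at hp
      rcases List.mem_cons.1 hp with rfl | hp
      · rw [List.cons_append, List.cons_append, edges_cons₂]
        exact List.mem_cons_self
      · rw [List.cons_append, List.cons_append, edges_cons₂]
        refine List.mem_cons_of_mem _ ?_
        have := ih r hp
        rwa [List.cons_append] at this

theorem edges_suffix_subset' {W : Type*} {l' l : List W} (h : l' <:+ l) :
    edgesOfL l' ⊆ edgesOfL l := by
  obtain ⟨pre, rfl⟩ := h
  induction pre with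
  | nil => simp
  | cons a pre ih => exact fun _ hp => edges_subset_cons _ (ih hp)

theorem edges_infix_subset {W : Type*} {l' l : List W} (h : l' <:+: l) :
    edgesOfL l' ⊆ edgesOfL l := by
  obtain ⟨pre, suf, rfl⟩ := h
  intro p hp
  have h1 : p ∈ edgesOfL (l' ++ suf) := edges_prefix_subset l' suf hp
  have h2 := edges_suffix_subset' (l := pre ++ (l' ++ suf)) ⟨pre, rfl⟩ h1
  rwa [← List.append_assoc] at h2

/-- The split graph of `E`. -/
def Dsp (E : V → V → Prop) : (V × Bool) → (V × Bool) → Prop :=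
  fun a b => (b = (a.1, true) ∧ a.2 = false) ∨ (E a.1 b.1 ∧ a.2 = true ∧ b.2 = false)

theorem Dsp_ne {a b : V × Bool} (h : Dsp E a b) : a ≠ b := by
  rcases h with ⟨rfl, h2⟩ | ⟨_, h2, h3⟩
  · intro he
    have := congrArg Prod.snd he
    rw [h2] at this
    simp at this
  · intro he; rw [he] at h2; rw [h2] at h3; simp at h3

def core (l : List V) : List (V × Bool) := l.flatMap (fun x => [(x, false), (x, true)])
def walkOf (l : List V) : List (V × Bool) := ((core l).drop 1).dropLast

theorem core_cons (x : V) (xs : List V) :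
    core (x :: xs) = (x, false) :: (x, true) :: core xs := rfl

theorem core_append (xs ys : List V) : core (xs ++ ys) = core xs ++ core ys := by
  simp [core]

theorem core_ne_nil {l : List V} (h : l ≠ []) : core l ≠ [] := by
  cases l with
  | nil => exact absurd rfl h
  | cons a t => simp [core_cons]

theorem mem_core {p : V × Bool} : ∀ {l : List V}, p ∈ core l → p.1 ∈ l := by
  intro l
  induction l with
  | nil => simp [core]
  | cons a t ih =>
    rw [core_cons]
    intro hp
    rcases List.mem_cons.1 hp with rfl | hp
    · simp
    rcases List.mem_cons.1 hp with rfl | hp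
    · simp
    · exact List.mem_cons_of_mem _ (ih hp)

theorem core_nodup : ∀ {l : List V}, l.Nodup → (core l).Nodup := by
  intro l
  induction l with
  | nil => simp [core]
  | cons a t ih =>
    intro h
    rw [core_cons]
    have h1 := List.nodup_cons.1 h
    refine List.nodup_cons.2 ⟨?_, List.nodup_cons.2 ⟨?_, ih h1.2⟩⟩
    · intro hm
      rcases List.mem_cons.1 hm with heq | hm
      · exact absurd (congrArg Prod.snd heq) (by simp)
      · exact h1.1 (mem_core hm)
    · intro hm
      exact h1.1 (mem_core hm)

theorem chain'_core {l : List V} (h : l.Chain' E) : (core l).Chain' (Dsp E) := by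
  induction l with
  | nil => simp [core, List.Chain']
  | cons a t ih =>
    rw [core_cons]
    have hio : Dsp E (a, false) (a, true) := Or.inl ⟨rfl, rfl⟩
    cases t with
    | nil => exact List.isChain_cons_cons.2 ⟨hio, List.isChain_singleton _⟩
    | cons b t' =>
      have hc := List.isChain_cons_cons.1 h
      have ihc := ih hc.2
      rw [core_cons] at ihc ⊢
      refine List.isChain_cons_cons.2 ⟨hio, List.isChain_cons_cons.2 ⟨Or.inr ⟨hc.1, rfl, rfl⟩, ?_⟩⟩
      exact ihc

theorem walkOf_infix (l : List V) : walkOf l <:+: core l := by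
  unfold walkOf
  exact ((core l).drop 1).dropLast_prefix.isInfix.trans ((core l).drop_suffix 1).isInfix

/-- Explicit form of `walkOf`. -/
theorem walkOf_eq {l : List V} (hh : l.head? = some u) (hl : l.getLast? = some w)
    (hlen : 2 ≤ l.length) :
    walkOf l = (u, true) :: core (internalsL l) ++ [(w, false)] := by
  match l, hlen with
  | a :: b :: t, _ =>
    have ha : a = u := by simpa using hh
    subst ha
    have htne : (b :: t) ≠ [] := by simp
    have hgl : (b :: t).getLast htne = w := by
      have : (a :: b :: t).getLast? = some ((b :: t).getLast htne) := by
        rw [List.getLast?_eq_getLast (by simp)]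
        simp [List.getLast_cons]
      rw [hl] at this
      exact (Option.some_injective _ this).symm
    have hdecomp : b :: t = (b :: t).dropLast ++ [w] := by
      conv_lhs => rw [← List.dropLast_append_getLast htne]
      rw [hgl]
    have hint : internalsL (a :: b :: t) = (b :: t).dropLast := rfl
    rw [hint]
    unfold walkOf
    conv_lhs => rw [core_cons, hdecomp, core_append]
    simp only [List.drop_one, List.tail_cons]
    rw [core_cons (x := w) (xs := [])]
    show ((a, true) :: (core ((b :: t).dropLast) ++ [(w, false), (w, true)])).dropLast
      = (a, true) :: core ((b :: t).dropLast) ++ [(w, false)]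
    rw [show ((a, true) :: (core ((b :: t).dropLast) ++ [(w, false), (w, true)]))
        = (((a, true) :: core ((b :: t).dropLast)) ++ [(w, false)]) ++ [(w, true)] by simp,
      List.dropLast_concat]

theorem walkOf_path {l : List V} (hp : IsPathList E u w l) (huw : u ≠ w) :
    IsPathList (Dsp E) (u, true) (w, false) (walkOf l) := by
  have hlen := by
    exact (by
      rcases hp with ⟨_, hh, hl⟩
      by_contra hc
      push_neg at hc
      interval_cases h : l.length
      · rw [List.length_eq_zero_iff.1 h] at hh; simp at hh
      · obtain ⟨a, rfl⟩ := List.length_eq_one_iff.1 h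
        simp at hh hl
        exact huw (hh.symm.trans hl) : 2 ≤ l.length)
  rw [walkOf_eq hp.2.1 hp.2.2 hlen]
  refine ⟨?_, rfl, by rw [List.getLast?_concat]⟩
  rw [← walkOf_eq hp.2.1 hp.2.2 hlen]
  exact List.IsChain.infix (chain'_core hp.1) (walkOf_infix l)

/-- Edge classification for `core`. -/
theorem core_edge_cases {p : (V × Bool) × (V × Bool)} : ∀ {l : List V},
    p ∈ edgesOfL (core l) →
    (p.1.2 = false ∧ p.2 = (p.1.1, true)) ∨
    (p.1.2 = true ∧ p.2.2 = false ∧ (p.1.1, p.2.1) ∈ edgesOfL l) := by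
  intro l
  induction l with
  | nil => simp [core, edgesOfL]
  | cons a t ih =>
    rw [core_cons]
    cases t with
    | nil =>
      intro hp
      simp only [core, List.flatMap_nil, List.append_nil] at hp
      have : p = ((a, false), (a, true)) := by
        rcases List.mem_cons.1 hp with h | h
        · exact h
        · simp [edgesOfL] at h
      subst this
      exact Or.inl ⟨rfl, rfl⟩
    | cons b t' =>
      intro hp
      rw [core_cons, edges_cons₂, edges_cons₂] at hp
      rcases List.mem_cons.1 hp with rfl | hp
      · exact Or.inl ⟨rfl, rfl⟩
      rcases List.mem_cons.1 hp with rfl | hp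
      · exact Or.inr ⟨rfl, rfl, by rw [edges_cons₂]; exact List.mem_cons_self⟩
      · rcases ih (by rw [core_cons]; exact hp) with h | h
        · exact Or.inl h
        · exact Or.inr ⟨h.1, h.2.1, edges_subset_cons _ h.2.2⟩

theorem mem_edges_fst_dropLast' {W : Type*} {p : W × W} :
    ∀ {l : List W}, p ∈ edgesOfL l → p.1 ∈ l.dropLast := by
  intro l
  induction l with
  | nil => simp [edgesOfL]
  | cons a t ih =>
    cases t with
    | nil => simp [edgesOfL]
    | cons b t' =>
      intro hp
      rw [edges_cons₂] at hp
      rcases List.mem_cons.1 hp with rfl | hp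
      · simp
      · rw [List.dropLast_cons₂]
        exact List.mem_cons_of_mem _ (ih hp)

/-- in-out edges of `walkOf l` come from internal vertices. -/
theorem walkOf_inout_internal {l : List V} (hh : l.head? = some u) (hl : l.getLast? = some w)
    (hlen : 2 ≤ l.length) {p : (V × Bool) × (V × Bool)} (hp : p ∈ edgesOfL (walkOf l))
    (hpf : p.1.2 = false) : p.1.1 ∈ internalsL l := by
  have h1 : p.1 ∈ (walkOf l).dropLast := mem_edges_fst_dropLast' hp
  rw [walkOf_eq hh hl hlen] at h1
  rw [show ((u, true) :: core (internalsL l) ++ [(w, false)])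
      = ((u, true) :: core (internalsL l)) ++ [(w, false)] by simp, List.dropLast_concat] at h1
  rcases List.mem_cons.1 h1 with heq | h1
  · rw [heq] at hpf; simp at hpf
  · exact mem_core h1

/-- Edge classification for `walkOf`. -/
theorem walkOf_edge_cases {l : List V} (hh : l.head? = some u) (hl : l.getLast? = some w)
    (hlen : 2 ≤ l.length) {p : (V × Bool) × (V × Bool)} (hp : p ∈ edgesOfL (walkOf l)) :
    (p.1.2 = false ∧ p.2 = (p.1.1, true) ∧ p.1.1 ∈ internalsL l) ∨
    (p.1.2 = true ∧ p.2.2 = false ∧ (p.1.1, p.2.1) ∈ edgesOfL l) := by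
  have hcore : p ∈ edgesOfL (core l) := edges_infix_subset (walkOf_infix l) hp
  rcases core_edge_cases hcore with ⟨h1, h2⟩ | h
  · exact Or.inl ⟨h1, h2, walkOf_inout_internal hh hl hlen hp h1⟩
  · exact Or.inr h

/-- Projection of a split-graph walk back to `V`. -/
theorem proj_walk (w : V) : ∀ (n : ℕ) (l : List (V × Bool)), l.length ≤ n →
    l.Chain' (Dsp E) → ∀ x : V, l.head? = some (x, true) → l.getLast? = some (w, false) →
    ∃ m : List V, IsPathList E x w m ∧
      ∀ z ∈ m, z = x ∨ z = w ∨ ((z, false), (z, true)) ∈ edgesOfL l := by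
  intro n
  induction n with
  | zero =>
    intro l hlen _ x hh _
    rw [List.length_eq_zero_iff.1 (Nat.le_zero.1 hlen)] at hh
    simp at hh
  | succ n ih =>
    intro l hlen hc x hh hl
    cases l with
    | nil => simp at hh
    | cons a rest =>
      have ha : a = (x, true) := by simpa using hh
      subst ha
      cases rest with
      | nil =>
        exfalso
        have : ((x, true) : V × Bool) = (w, false) := by simpa using hl
        exact absurd (congrArg Prod.snd this) (by simp)
      | cons b rest' =>
        obtain ⟨b1, b2⟩ := b
        have hD1 : Dsp E (x, true) (b1, b2) := (List.isChain_cons_cons.1 hc).1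
        have hb : E x b1 ∧ b2 = false := by
          rcases hD1 with ⟨_, h2⟩ | ⟨h1, _, h3⟩
          · simp at h2
          · exact ⟨h1, h3⟩
        have hb2 : b2 = false := hb.2
        subst hb2
        cases rest' with
        | nil =>
          have hbw : (b1, false) = ((w : V), false) := by simpa using hl
          have hb1w : b1 = w := congrArg Prod.fst hbw
          subst hb1w
          refine ⟨[x, b1], ⟨?_, rfl, rfl⟩, ?_⟩
          · exact List.isChain_cons_cons.2 ⟨hb.1, List.isChain_singleton _⟩
          · intro z hz
            rcases List.mem_cons.1 hz with rfl | hz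
            · exact Or.inl rfl
            · simp at hz; exact Or.inr (Or.inl hz)
        | cons c rest'' =>
          have hD2 : Dsp E (b1, false) c := (List.isChain_cons_cons.1 (List.isChain_cons_cons.1 hc).2).1
          have hcc : c = (b1, true) := by
            rcases hD2 with ⟨h1, _⟩ | ⟨_, h2, _⟩
            · exact h1
            · simp at h2
          subst hcc
          have hchain' : ((b1, true) :: rest'').Chain' (Dsp E) :=
            (List.isChain_cons_cons.1 (List.isChain_cons_cons.1 hc).2).2
          have hlast' : ((b1, true) :: rest'').getLast? = some (w, false) := by
            rw [← hl, List.getLast?_cons_cons, List.getLast?_cons_cons]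
          obtain ⟨m, hm, hmem⟩ := ih ((b1, true) :: rest'') (by simp at hlen ⊢; omega) hchain'
            b1 rfl hlast'
          have hmne : m ≠ [] := by
            rintro rfl; simp [IsPathList] at hm
          refine ⟨x :: m, ⟨?_, rfl, ?_⟩, ?_⟩
          · refine List.isChain_cons.2 ⟨?_, hm.1⟩
            intro h hhm
            rw [hm.2.1] at hhm
            have : b1 = h := by simpa using hhm
            rw [← this]; exact hb.1
          · cases m with
            | nil => exact absurd rfl hmne
            | cons c' m' => rw [List.getLast?_cons_cons]; exact hm.2.2
          · intro z hz
            rcases List.mem_cons.1 hz with rfl | hz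
            · exact Or.inl rfl
            rcases hmem z hz with rfl | h | h
            · right; right
              rw [edges_cons₂, edges_cons₂]
              exact List.mem_cons_of_mem _ (List.mem_cons_self)
            · exact Or.inr (Or.inl h)
            · right; right
              rw [edges_cons₂]
              refine List.mem_cons_of_mem _ ?_
              rw [edges_cons₂]
              exact List.mem_cons_of_mem _ h

section Cross
variable {W : Type*} {S : W → Prop}

theorem exists_crossing : ∀ (l : List W) (a b : W), l.head? = some a → l.getLast? = some b →
    S a → ¬ S b → ∃ p ∈ edgesOfL l, S p.1 ∧ ¬ S p.2 := by
  intro l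
  induction l with
  | nil => intro a b hh _ _ _; simp at hh
  | cons x t ih =>
    intro a b hh hl hSa hSb
    have hx : x = a := by simpa using hh
    subst hx
    cases t with
    | nil =>
      have : x = b := by simpa using hl
      subst this
      exact absurd hSa hSb
    | cons y t' =>
      by_cases hSy : S y
      · obtain ⟨p, hp, h1, h2⟩ := ih y b rfl (by rw [← hl, List.getLast?_cons_cons]) hSy hSb
        exact ⟨p, edges_subset_cons _ hp, h1, h2⟩
      · exact ⟨(x, y), by rw [edges_cons₂]; exact List.mem_cons_self, hSa, hSy⟩

theorem all_not_S : ∀ (l : List W), (∀ p ∈ edgesOfL l, ¬ S p.1 → ¬ S p.2) →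
    ∀ a, l.head? = some a → ¬ S a → ∀ z ∈ l, ¬ S z := by
  intro l
  induction l with
  | nil => intro _ a hh; simp at hh
  | cons x t ih =>
    intro hprop a hh hSa z hz
    have hx : x = a := by simpa using hh
    subst hx
    rcases List.mem_cons.1 hz with rfl | hz
    · exact hSa
    cases t with
    | nil => simp at hz
    | cons y t' =>
      have hSy : ¬ S y :=
        hprop (x, y) (by rw [edges_cons₂]; exact List.mem_cons_self) hSa
      exact ih (fun p hp => hprop p (edges_subset_cons _ hp)) y rfl hSy z hz

theorem unique_cross : ∀ (l : List W), (∀ p ∈ edgesOfL l, ¬ S p.1 → ¬ S p.2) →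
    ∀ p q, p ∈ edgesOfL l → q ∈ edgesOfL l → S p.1 → ¬ S p.2 → S q.1 → ¬ S q.2 → p = q := by
  intro l
  induction l with
  | nil => intro _ p q hp; simp [edgesOfL] at hp
  | cons x t ih =>
    intro hprop p q hp hq hp1 hp2 hq1 hq2
    cases t with
    | nil => simp [edgesOfL] at hp
    | cons y t' =>
      rw [edges_cons₂] at hp hq
      have hprop' : ∀ p ∈ edgesOfL (y :: t'), ¬ S p.1 → ¬ S p.2 :=
        fun p hp => hprop p (edges_subset_cons _ hp)
      rcases List.mem_cons.1 hp with rfl | hp <;> rcases List.mem_cons.1 hq with rfl | hq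
      · rfl
      · exfalso
        have hally := all_not_S (y :: t') hprop' y rfl hp2
        have := (List.of_mem_zip hq).1
        exact (hally q.1 this) hq1
      · exfalso
        have hally := all_not_S (y :: t') hprop' y rfl hq2
        have := (List.of_mem_zip hp).1
        exact (hally p.1 this) hp1
      · exact ih hprop' p q hp hq hp1 hp2 hq1 hq2

end Cross



theorem path_ne_nil (h : IsPathList E u v l) : l ≠ [] := by
  rintro rfl; simp [IsPathList] at h

theorem path_head (h : IsPathList E u v l) : l.head? = some u := h.2.1
theorem path_last (h : IsPathList E u v l) : l.getLast? = some v := h.2.2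

theorem path_length_two (h : IsPathList E u v l) (huv : u ≠ v) : 2 ≤ l.length := by
  match l, h with
  | [], h => exact absurd rfl (path_ne_nil h)
  | [a], h =>
    exfalso; apply huv
    have h1 := h.2.1; have h2 := h.2.2
    simp [List.getLast?] at h1 h2
    rw [← h1, ← h2]
  | a :: b :: l, h => simp

theorem rtg_of_path (h : IsPathList E u v l) : Relation.ReflTransGen E u v := by
  induction l generalizing u with
  | nil => exact absurd rfl (path_ne_nil h)
  | cons a l ih =>
    obtain ⟨hc, hh, hl⟩ := h
    have ha : a = u := by simpa using hh
    subst ha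
    cases l with
    | nil => simp at hl; exact hl ▸ Relation.ReflTransGen.refl
    | cons b l =>
      have hE : E a b := (List.isChain_cons_cons.1 hc).1
      have : Relation.ReflTransGen E b v :=
        ih ⟨(List.isChain_cons_cons.1 hc).2, rfl, by simpa using hl⟩
      exact Relation.ReflTransGen.head hE this

/-- Simplification: from a walk, a nodup walk with the same endpoints,
vertices a subset, edges a subset. -/
theorem simplify : ∀ l : List V, l.Chain' E →
    ∃ l' : List V, l'.Nodup ∧ l'.Chain' E ∧ l'.head? = l.head? ∧ l'.getLast? = l.getLast? ∧
      (∀ z ∈ l', z ∈ l) ∧ ∀ p ∈ edgesOfL l', p ∈ edgesOfL l := by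
  suffices h : ∀ (n : ℕ) (l : List V), l.length ≤ n → l.Chain' E →
      ∃ l' : List V, l'.Nodup ∧ l'.Chain' E ∧ l'.head? = l.head? ∧ l'.getLast? = l.getLast? ∧
        (∀ z ∈ l', z ∈ l) ∧ (∀ p ∈ edgesOfL l', p ∈ edgesOfL l) by
    intro l
    exact h l.length l le_rfl
  intro n
  induction n with
  | zero =>
    intro l hl _
    rw [List.length_eq_zero_iff.1 (Nat.le_zero.1 hl)]
    exact ⟨[], by simp [edgesOfL, List.Chain']⟩
  | succ n ih =>
  intro l hlen hc
  cases l with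
  | nil => exact ⟨[], by simp [edgesOfL, List.Chain']⟩
  | cons a rest =>
    by_cases ha : a ∈ rest
    · obtain ⟨r₁, r₂, rfl⟩ := List.append_of_mem ha
      have hsuf : (a :: r₂) <:+ (a :: r₁ ++ a :: r₂) := ⟨a :: r₁, by simp⟩
      have hlen2 : (a :: r₂).length ≤ n := by
        simp at hlen ⊢; omega
      have hc' : (a :: r₂).Chain' E := List.IsChain.infix hc hsuf.isInfix
      obtain ⟨l', h1, h2, h3, h4, h5, h6⟩ := ih (a :: r₂) hlen2 hc'
      refine ⟨l', h1, h2, by simpa using h3, ?_, fun z hz => hsuf.subset (h5 z hz),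
        fun p hp => edges_suffix_subset' hsuf (h6 p hp)⟩
      rw [h4]
      have : (a :: (r₁ ++ a :: r₂)) = (a :: r₁) ++ (a :: r₂) := by simp
      rw [this, List.getLast?_append]
      rfl
    · cases rest with
      | nil => exact ⟨[a], by simp [edgesOfL, List.Chain']⟩
      | cons b rest' =>
        have hc' : (b :: rest').Chain' E := (List.isChain_cons_cons.1 hc).2
        obtain ⟨l', h1, h2, h3, h4, h5, h6⟩ := ih (b :: rest') (by simp at hlen ⊢; omega) hc'
        have hne : l' ≠ [] := by
          intro h; rw [h] at h3; simp at h3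
        obtain ⟨c, m, rfl⟩ := List.exists_cons_of_ne_nil hne
        have hcb : c = b := by simpa using h3
        subst hcb
        refine ⟨a :: c :: m, ?_, ?_, rfl, by simpa using h4, ?_, ?_⟩
        · exact List.nodup_cons.2 ⟨fun hm => ha (h5 _ hm), h1⟩
        · exact List.isChain_cons_cons.2 ⟨(List.isChain_cons_cons.1 hc).1, h2⟩
        · intro z hz
          rcases List.mem_cons.1 hz with rfl | hz
          · exact List.mem_cons_self
          · exact List.mem_cons_of_mem _ (h5 _ hz)
        · intro p hp
          rw [edges_cons₂] at hp ⊢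
          rcases List.mem_cons.1 hp with rfl | hp
          · exact List.mem_cons_self
          · exact List.mem_cons_of_mem _ (h6 _ hp)

theorem path_of_rtg (h : Relation.ReflTransGen E u v) :
    ∃ l, IsPathList E u v l ∧ l.Nodup := by
  have : ∃ l, IsPathList E u v l := by
    induction h with
    | refl => exact ⟨[u], by simp [IsPathList, List.Chain']⟩
    | tail _ hbc ih =>
      obtain ⟨l, hc, hh, hl⟩ := ih
      rename_i b c _
      refine ⟨l ++ [c], ?_, ?_, by simp⟩
      · simp only [List.Chain'] at hc ⊢
        rw [List.isChain_append]
        refine ⟨hc, List.isChain_singleton _, ?_⟩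
        intro x hx y hy
        simp at hy
        rw [hl] at hx; simp at hx
        rw [← hx, ← hy]; exact hbc
      · cases l with
        | nil => simp at hl
        | cons a l => simpa using hh
  obtain ⟨l, hc, hh, hl⟩ := this
  obtain ⟨l', h1, h2, h3, h4, _, _⟩ := simplify l hc
  exact ⟨l', ⟨h2, h3.trans hh ▸ by rw [h3, hh], by rw [h4, hl]⟩, h1⟩



theorem internals_subset (h : z ∈ internalsL l) : z ∈ l :=
  List.drop_subset 1 l (List.dropLast_subset _ h)

theorem not_mem_dropLast_of_nodup (hn : l.Nodup) (hne : l ≠ []) :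
    l.getLast hne ∉ l.dropLast := by
  intro h
  have := List.dropLast_append_getLast hne
  rw [← this] at hn
  rw [List.nodup_append] at hn
  exact hn.2.2 _ h _ (List.mem_singleton_self _) rfl

theorem internals_ne_head_last (hn : l.Nodup) (hh : l.head? = some u)
    (hl : l.getLast? = some w) (hz : z ∈ internalsL l) : z ≠ u ∧ z ≠ w := by
  cases l with
  | nil => simp at hh
  | cons a t =>
    have ha : a = u := by simpa using hh
    subst ha
    unfold internalsL at hz
    simp only [List.drop_one, List.tail_cons] at hz
    constructor
    · rintro rfl
      exact (List.nodup_cons.1 hn).1 (List.dropLast_subset _ hz)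
    · rintro rfl
      cases t with
      | nil => simp at hz
      | cons b t' =>
        have hne : (b :: t') ≠ [] := by simp
        have hw : (b :: t').getLast hne = z := by
          have : (a :: b :: t').getLast? = some ((b :: t').getLast hne) := by
            rw [List.getLast?_eq_getLast (by simp)]
            simp [List.getLast_cons]
        
          rw [hl] at this; exact (Option.some_injective _ this).symm
        rw [← hw] at hz
        exact not_mem_dropLast_of_nodup (List.nodup_cons.1 hn).2 hne hz

theorem mem_internals_of_ne (hh : l.head? = some u) (hl : l.getLast? = some w)
    (hz : z ∈ l) (hzu : z ≠ u) (hzw : z ≠ w) : z ∈ internalsL l := by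
  cases l with
  | nil => simp at hz
  | cons a t =>
    have ha : a = u := by simpa using hh
    subst ha
    rcases List.mem_cons.1 hz with rfl | hz
    · exact absurd rfl hzu
    unfold internalsL
    simp only [List.drop_one, List.tail_cons]
    cases t with
    | nil => simp at hz
    | cons b t' =>
      have hne : (b :: t') ≠ [] := by simp
      have hw : (b :: t').getLast hne = w := by
        have : (a :: b :: t').getLast? = some ((b :: t').getLast hne) := by
          rw [List.getLast?_eq_getLast (by simp)]
          simp [List.getLast_cons]
        rw [hl] at this; exact (Option.some_injective _ this.symm)
      have := List.dropLast_append_getLast hne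
      rw [← this] at hz
      rcases List.mem_append.1 hz with h | h
      · exact h
      · simp at h; rw [hw] at h; exact absurd h hzw

theorem internals_nil_two (hh : l.head? = some u) (hl : l.getLast? = some w)
    (hlen : 2 ≤ l.length) (hint : internalsL l = []) : l = [u, w] := by
  match l, hlen with
  | a :: b :: t, _ =>
    have ha : a = u := by simpa using hh
    subst ha
    unfold internalsL at hint
    simp only [List.drop_one, List.tail_cons] at hint
    have : t = [] := by
      cases t with
      | nil => rfl
      | cons c t' => simp [List.dropLast_cons₂] at hint
    subst this
    have : b = w := by simpa using hl
    rw [this]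

theorem mem_edges_fst_dropLast {p : V × V} : ∀ {l : List V}, p ∈ edgesOfL l → p.1 ∈ l.dropLast := by
  intro l
  induction l with
  | nil => simp [edgesOfL]
  | cons a t ih =>
    cases t with
    | nil => simp [edgesOfL]
    | cons b t' =>
      intro hp
      rw [edges_cons₂] at hp
      rcases List.mem_cons.1 hp with rfl | hp
      · simp
      · rw [List.dropLast_cons₂]
        exact List.mem_cons_of_mem _ (ih hp)

theorem edges_fst_ne_last {p : V × V} (hn : l.Nodup) (hl : l.getLast? = some w)
    (hp : p ∈ edgesOfL l) : p.1 ≠ w := by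
  rintro rfl
  have hne : l ≠ [] := by rintro rfl; simp at hl
  have : l.getLast hne = p.1 := by
    rw [List.getLast?_eq_getLast hne] at hl
    exact (Option.some_injective _ hl)
  exact not_mem_dropLast_of_nodup hn hne (this ▸ mem_edges_fst_dropLast hp)

theorem edges_snd_ne_head {p : V × V} (hn : l.Nodup) (hh : l.head? = some u)
    (hp : p ∈ edgesOfL l) : p.2 ≠ u := by
  have h2 := (List.of_mem_zip hp).2
  cases l with
  | nil => simp at hh
  | cons a t =>
    have ha : a = u := by simpa using hh
    intro hq
    exact (List.nodup_cons.1 hn).1 (by rw [ha, ← hq]; exact h2)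

theorem edges_ne_of_nodup {p : V × V} (hn : l.Nodup) (hp : p ∈ edgesOfL l) : p.1 ≠ p.2 := by
  have : l.Chain' (· ≠ ·) := List.Pairwise.isChain hn
  revert hp
  induction l with
  | nil => simp [edgesOfL]
  | cons a t ih =>
    cases t with
    | nil => simp [edgesOfL]
    | cons b t' =>
      intro hp
      rw [edges_cons₂] at hp
      rcases List.mem_cons.1 hp with rfl | hp
      · exact (List.isChain_cons_cons.1 this).1
      · exact ih (List.nodup_cons.1 hn).2 (List.isChain_cons_cons.1 this).2 hp

theorem edge_head_last (hn : l.Nodup) (hh : l.head? = some v) (hl : l.getLast? = some w)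
    (hp : (v, w) ∈ edgesOfL l) : l = [v, w] := by
  match l with
  | [] => simp [edgesOfL] at hp
  | [a] => simp [edgesOfL] at hp
  | a :: b :: t =>
    have ha : a = v := by simpa using hh
    subst ha
    rw [edges_cons₂] at hp
    rcases List.mem_cons.1 hp with heq | hp
    · have hb : b = w := by
        have := congrArg Prod.snd heq; simpa using this.symm
      subst hb
      cases t with
      | nil => rfl
      | cons c t' =>
        exfalso
        have hlast : (a :: b :: c :: t').getLast? = some ((c :: t').getLast (by simp)) := by
          rw [List.getLast?_eq_getLast (by simp)]
          simp [List.getLast_cons]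
        rw [hl] at hlast
        have : b = (c :: t').getLast (by simp) := by
          have := Option.some_injective _ hlast; exact this
        have hmem : b ∈ c :: t' := this ▸ List.getLast_mem _
        exact (List.nodup_cons.1 (List.nodup_cons.1 hn).2).1 hmem
    · exfalso
      have := (List.of_mem_zip hp).1
      exact (List.nodup_cons.1 hn).1 this

theorem edges_nodup (hn : l.Nodup) : (edgesOfL l).Nodup := by
  induction l with
  | nil => simp [edgesOfL]
  | cons a t ih =>
    cases t with
    | nil => simp [edgesOfL]
    | cons b t' =>
      rw [edges_cons₂]
      refine List.nodup_cons.2 ⟨?_, ih (List.nodup_cons.1 hn).2⟩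
      intro hmem
      exact (List.nodup_cons.1 hn).1 ((List.of_mem_zip hmem).1)

theorem mem_head_or_edge_snd (hz : z ∈ l) :
    l.head? = some z ∨ ∃ p ∈ edgesOfL l, p.2 = z := by
  induction l with
  | nil => simp at hz
  | cons a t ih =>
    rcases List.mem_cons.1 hz with rfl | hz
    · exact Or.inl rfl
    · rcases ih hz with hh | ⟨p, hp, hpz⟩
      · cases t with
        | nil => simp at hh
        | cons b t' =>
          have : b = z := by simpa using hh
          exact Or.inr ⟨(a, b), by rw [edges_cons₂]; exact List.mem_cons_self, this⟩
      · cases t with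
        | nil => simp [edgesOfL] at hp
        | cons b t' =>
          exact Or.inr ⟨p, by rw [edges_cons₂]; exact List.mem_cons_of_mem _ hp, hpz⟩



section ExcessM
variable {W : Type*}

noncomputable def excessZ (M : Multiset (W × W)) (y : W) : ℤ :=
  (M.countP (fun e => e.1 = y) : ℤ) - (M.countP (fun e => e.2 = y) : ℤ)

theorem excessZ_add (A B : Multiset (W × W)) (y : W) :
    excessZ (A + B) y = excessZ A y + excessZ B y := by
  unfold excessZ
  rw [Multiset.countP_add, Multiset.countP_add]
  push_cast; ring

theorem excessZ_sub {A B : Multiset (W × W)} (h : B ≤ A) (y : W) :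
    excessZ (A - B) y = excessZ A y - excessZ B y := by
  have : A = (A - B) + B := (tsub_add_cancel_of_le h).symm
  nth_rewrite 2 [this]
  rw [excessZ_add]; ring

theorem excessZ_cons (e : W × W) (M : Multiset (W × W)) (y : W) :
    excessZ (e ::ₘ M) y = excessZ {e} y + excessZ M y := by
  have : e ::ₘ M = {e} + M := by simp
  rw [this, excessZ_add]

theorem excessZ_singleton (e : W × W) (y : W) :
    excessZ {e} y = (if e.1 = y then 1 else 0) - (if e.2 = y then 1 else 0) := by
  unfold excessZ
  have h0 : ({e} : Multiset (W × W)) = e ::ₘ 0 := rfl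
  rw [h0, Multiset.countP_cons, Multiset.countP_cons, Multiset.countP_zero, Multiset.countP_zero]
  split_ifs <;> simp

theorem excessZ_map_swap (M : Multiset (W × W)) (y : W) :
    excessZ (M.map Prod.swap) y = - excessZ M y := by
  induction M using Multiset.induction_on with
  | empty => simp [excessZ]
  | cons a s ih =>
    rw [Multiset.map_cons, excessZ_cons, excessZ_cons, ih, excessZ_singleton, excessZ_singleton]
    simp only [Prod.fst_swap, Prod.snd_swap]
    ring

/-- excess of the edge multiset of a walk. -/
theorem excessZ_walk : ∀ (l : List W) (u w : W), l.head? = some u → l.getLast? = some w →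
    ∀ y, excessZ (edgesOfL l : Multiset (W × W)) y =
      (if u = y then 1 else 0) - (if w = y then 1 else 0) := by
  intro l
  induction l with
  | nil => simp
  | cons a t ih =>
    intro u w hh hl y
    have ha : a = u := by simpa using hh
    subst ha
    cases t with
    | nil =>
      have : a = w := by simpa using hl
      subst this
      simp [edgesOfL, excessZ]
    | cons b t' =>
      have hiht := ih b w rfl (by simpa using hl) y
      rw [edges_cons₂]
      have : ((a, b) :: edgesOfL (b :: t') : Multiset (W × W)) = (a, b) ::ₘ (edgesOfL (b :: t')) := rfl
      rw [this, excessZ_cons, hiht, excessZ_singleton]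
      simp only []
      split_ifs <;> simp_all <;> ring

/-- Walk extraction from a multiset with positive excess. -/
theorem extract (t : W) : ∀ (n : ℕ) (M : Multiset (W × W)), M.card ≤ n →
    (∀ e ∈ M, e.1 ≠ e.2) → ∀ x, x ≠ t → 1 ≤ excessZ M x →
    (∀ y, y ≠ t → y ≠ x → 0 ≤ excessZ M y) →
    ∃ l : List W, l.head? = some x ∧ l.getLast? = some t ∧
      (edgesOfL l : Multiset (W × W)) ≤ M := by
  intro n
  induction n with
  | zero =>
    intro M hcard _ x _ hx _
    rw [Multiset.card_eq_zero.1 (Nat.le_zero.1 hcard)] at hx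
    simp [excessZ] at hx
  | succ n ih =>
    intro M hcard hnl x hxt hx hy
    have hpos : 0 < M.countP (fun e => e.1 = x) := by
      unfold excessZ at hx
      omega
    obtain ⟨e, heM, hex⟩ : ∃ e ∈ M, e.1 = x := by
      rw [Multiset.countP_pos] at hpos; exact hpos
    obtain ⟨z, rfl⟩ : ∃ z, e = (x, z) := ⟨e.2, by rw [← hex]⟩
    by_cases hzt : z = t
    · refine ⟨[x, z], rfl, by simp [hzt], ?_⟩
      have : (edgesOfL [x, z] : Multiset (W × W)) = {(x, z)} := rfl
      rw [this]
      exact Multiset.singleton_le.2 heM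
    · set M' := M.erase (x, z) with hM'
      have hle : (x, z) ::ₘ M' = M := Multiset.cons_erase heM
      have hcard' : M'.card ≤ n := by
        have := Multiset.card_erase_add_one heM
        rw [hM']
        omega
      have hxz : x ≠ z := hnl _ heM
      have hexM' : ∀ y, excessZ M' y = excessZ M y - excessZ {((x : W), z)} y := by
        intro y
        rw [← hle, excessZ_cons]; ring
      have side1 : 1 ≤ excessZ M' z := by
        rw [hexM', excessZ_singleton]
        have := hy z hzt (Ne.symm hxz)
        split_ifs <;> simp_all <;> omega
      have side2 : ∀ y, y ≠ t → y ≠ z → 0 ≤ excessZ M' y := by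
        intro y hyt hyz
        rw [hexM', excessZ_singleton]
        by_cases hyx : y = x
        · subst hyx
          split_ifs <;> omega
        · have := hy y hyt hyx
          have hx1 : ¬ (x = y) := fun h => hyx h.symm
          have hz1 : ¬ (z = y) := fun h => hyz h.symm
          rw [if_neg hx1, if_neg hz1]
          omega
      obtain ⟨l, hh, hl, hsub⟩ := ih M' hcard' (fun e he => hnl e (by rw [← hle]; exact Multiset.mem_cons_of_mem he)) z hzt side1 side2
      obtain ⟨c, m, rfl⟩ : ∃ c m, l = c :: m := by
        cases l with
        | nil => simp at hh
        | cons c m => exact ⟨c, m, rfl⟩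
      have hc : c = z := by simpa using hh
      subst hc
      refine ⟨x :: c :: m, rfl, by rw [List.getLast?_cons_cons]; exact hl, ?_⟩
      rw [edges_cons₂]
      have h2 : ((x, c) :: edgesOfL (c :: m) : Multiset (W × W)) = (x, c) ::ₘ (edgesOfL (c :: m)) := rfl
      rw [h2, ← hle]
      exact Multiset.cons_le_cons _ hsub



theorem le_of_nodup_subset {α : Type*} {s t : Multiset α} (h : s.Nodup)
    (hsub : ∀ x ∈ s, x ∈ t) : s ≤ t := by
  classical
  rw [Multiset.le_iff_count]
  intro a
  by_cases ha : a ∈ s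
  · have h1 := Multiset.nodup_iff_count_le_one.1 h a
    have h2 := Multiset.one_le_count_iff_mem.2 (hsub a ha)
    omega
  · simp [Multiset.count_eq_zero.2 ha]

end ExcessM

theorem delV_to_path (hx : x ≠ u) (h : Relation.ReflTransGen (delV E x) u w) :
    ∃ l, IsPathList E u w l ∧ l.Nodup ∧ x ∉ l := by
  obtain ⟨l, hp, hnd⟩ := path_of_rtg h
  refine ⟨l, ⟨List.IsChain.imp (fun _ _ hab => hab.1) hp.1, hp.2.1, hp.2.2⟩, hnd, ?_⟩
  intro hxl
  rcases mem_head_or_edge_snd hxl with hh | ⟨p, hp', hpz⟩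
  · rw [hp.2.1] at hh
    exact hx (Option.some_injective _ hh).symm
  · exact (chain'_iff_edges.1 hp.1 p hp').2.2 hpz

/-- Menger-type core lemma: no edge `v→w`, reachability, and no single cut vertex
give two internally disjoint paths. -/
theorem menger2 (hrt : Relation.ReflTransGen E v w) (hvw : v ≠ w)
    (hres : ∀ x, x ≠ v → x ≠ w → ∃ l, IsPathList E v w l ∧ l.Nodup ∧ x ∉ l)
    (hnE : ¬ E v w) : TwoVPaths E v w := by
  classical
  obtain ⟨P₀, hP₀, hP₀nd⟩ := path_of_rtg hrt
  set s : V × Bool := (v, true) with hs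
  set t : V × Bool := (w, false) with ht
  have hst : s ≠ t := by
    intro h
    exact absurd (congrArg Prod.snd h) (by simp [hs, ht])
  have hlen0 : 2 ≤ P₀.length := path_length_two hP₀ hvw
  set P : List (V × Bool) := walkOf P₀ with hPdef
  have hP : IsPathList (Dsp E) s t P := walkOf_path hP₀ hvw
  have hPnd : P.Nodup := (core_nodup hP₀nd).sublist (walkOf_infix P₀).sublist
  set R : (V × Bool) → (V × Bool) → Prop :=
    fun a b => (Dsp E a b ∧ (a, b) ∉ edgesOfL P) ∨ ((b, a) ∈ edgesOfL P) with hR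
  set S : (V × Bool) → Prop := fun a => Relation.ReflTransGen R s a with hS
  have hPD : ∀ p ∈ edgesOfL P, Dsp E p.1 p.2 := chain'_iff_edges.1 hP.1
  have hPprop : ∀ p ∈ edgesOfL P, ¬ S p.1 → ¬ S p.2 := by
    intro p hp h1 h2
    exact h1 (h2.tail (Or.inr (by simpa using hp)))
  by_cases htS : S t
  swap
  · -- cut case: derive a contradiction
    exfalso
    obtain ⟨e, heP, heS1, heS2⟩ :=
      exists_crossing P s t hP.2.1 hP.2.2 Relation.ReflTransGen.refl htS
    have hkey : ∀ L : List (V × Bool), IsPathList (Dsp E) s t L → e ∈ edgesOfL L := by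
      intro L hL
      obtain ⟨q, hq, hq1, hq2⟩ :=
        exists_crossing L s t hL.2.1 hL.2.2 Relation.ReflTransGen.refl htS
      have hqD : Dsp E q.1 q.2 := chain'_iff_edges.1 hL.1 q hq
      have hqP : q ∈ edgesOfL P := by
        by_contra hqP
        exact hq2 (hq1.tail (Or.inl ⟨hqD, by simpa using hqP⟩))
      have heq := unique_cross P hPprop q e hqP heP hq1 hq2 heS1 heS2
      exact heq ▸ hq
    rcases walkOf_edge_cases hP₀.2.1 hP₀.2.2 hlen0 heP with ⟨hf, hsnd, hint⟩ | ⟨hf, hsnd, hedge⟩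
    · -- in-out edge of an internal vertex x
      obtain ⟨hxv, hxw⟩ := internals_ne_head_last hP₀nd hP₀.2.1 hP₀.2.2 hint
      obtain ⟨m, hm, hmnd, hxm⟩ := hres e.1.1 hxv hxw
      have heL := hkey _ (walkOf_path hm hvw)
      have h1 : e.1 ∈ core m := (walkOf_infix m).subset (List.of_mem_zip heL).1
      exact hxm (mem_core h1)
    · -- split edge coming from an `E`-edge (e.1.1, e.2.1) of P₀
      have hExy : E e.1.1 e.2.1 := chain'_iff_edges.1 hP₀.1 _ hedge
      by_cases hxv : e.1.1 = v
      · by_cases hyw : e.2.1 = w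
        · exact hnE (hxv ▸ hyw ▸ hExy)
        · by_cases hyv : e.2.1 = v
          · exact (edges_ne_of_nodup hP₀nd hedge) (hxv.trans hyv.symm)
          · obtain ⟨m, hm, hmnd, hym⟩ := hres _ hyv hyw
            have heL := hkey _ (walkOf_path hm hvw)
            have h1 : e.2 ∈ core m :=
              (walkOf_infix m).subset (List.tail_subset _ (List.of_mem_zip heL).2)
            exact hym (mem_core h1)
      · by_cases hxw : e.1.1 = w
        · exact (edges_fst_ne_last hP₀nd hP₀.2.2 hedge) hxw
        · obtain ⟨m, hm, hmnd, hxm⟩ := hres _ hxv hxw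
          have heL := hkey _ (walkOf_path hm hvw)
          have h1 : e.1 ∈ core m := (walkOf_infix m).subset (List.of_mem_zip heL).1
          exact hxm (mem_core h1)
  · -- augmenting case: construct the two paths
    obtain ⟨Q, hQ, hQnd⟩ := path_of_rtg htS
    set EP : Multiset ((V × Bool) × (V × Bool)) := (↑(edgesOfL P) : Multiset ((V × Bool) × (V × Bool))) with hEP
    set A : Multiset ((V × Bool) × (V × Bool)) := (↑(edgesOfL Q) : Multiset ((V × Bool) × (V × Bool))) with hA
    set Arev := A.filter (fun e => (e.2, e.1) ∈ edgesOfL P) with hArev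
    set Afwd := A.filter (fun e => ¬ ((e.2, e.1) ∈ edgesOfL P)) with hAfwd
    have hAsplit : Arev + Afwd = A := Multiset.filter_add_not _ _
    have hQR : ∀ p ∈ edgesOfL Q, R p.1 p.2 := chain'_iff_edges.1 hQ.1
    have hfwdD : ∀ p ∈ Afwd, Dsp E p.1 p.2 ∧ p ∉ edgesOfL P := by
      intro p hp
      have h1 := Multiset.mem_filter.1 hp
      have h2 := hQR p (by exact_mod_cast h1.1)
      rcases h2 with ⟨hD, hnP⟩ | hrev
      · exact ⟨hD, fun h => hnP (by simpa using h)⟩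
      · exact absurd hrev h1.2
    have hApnd : A.Nodup := by
      rw [hA, Multiset.coe_nodup]
      exact edges_nodup hQnd
    have hEPnd : EP.Nodup := by
      rw [hEP, Multiset.coe_nodup]
      exact edges_nodup hPnd
    have hswaple : Arev.map Prod.swap ≤ EP := by
      refine le_of_nodup_subset ?_ ?_
      · exact Multiset.Nodup.map Prod.swap_injective (Multiset.Nodup.filter _ hApnd)
      · intro e he
        obtain ⟨f, hf, rfl⟩ := Multiset.mem_map.1 he
        have := (Multiset.mem_filter.1 hf).2
        rw [hEP]
        exact Multiset.mem_coe.2 this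
    set M := EP - Arev.map Prod.swap + Afwd with hM
    have hMD : ∀ p ∈ M, Dsp E p.1 p.2 := by
      intro p hp
      rcases Multiset.mem_add.1 hp with hp | hp
      · have : p ∈ EP := Multiset.mem_of_le (Multiset.sub_le_self _ _) hp
        exact hPD p (Multiset.mem_coe.1 this)
      · exact (hfwdD p hp).1
    have hMex : ∀ y', excessZ M y' = (if s = y' then 2 else 0) - (if t = y' then 2 else 0) := by
      intro y'
      have e5 : (EP - Arev.map Prod.swap) + Arev.map Prod.swap = EP :=
        tsub_add_cancel_of_le hswaple
      have e5' := excessZ_add (EP - Arev.map Prod.swap) (Arev.map Prod.swap) y'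
      rw [e5] at e5'
      have e4 : excessZ (EP - Arev.map Prod.swap) y'
          = excessZ EP y' - excessZ (Arev.map Prod.swap) y' := by linarith
      have e3 : excessZ M y' = excessZ EP y' + excessZ A y' := by
        rw [hM, excessZ_add, e4, excessZ_map_swap, ← hAsplit, excessZ_add]
        ring
      rw [e3, excessZ_walk P s t hP.2.1 hP.2.2 y', excessZ_walk Q s t hQ.2.1 hQ.2.2 y']
      split_ifs <;> ring
    have hMnl : ∀ p ∈ M, p.1 ≠ p.2 := fun p hp => Dsp_ne (hMD p hp)
    have hMnd : M.Nodup := by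
      have h1 : M ≤ EP + Afwd := by
        rw [hM]
        exact add_le_add (Multiset.sub_le_self _ _) le_rfl
      refine Multiset.nodup_of_le h1 (Multiset.nodup_add.2 ⟨hEPnd, ?_, ?_⟩)
      · exact Multiset.Nodup.filter _ hApnd
      · rw [Multiset.disjoint_left]
        intro p hp1 hp2
        exact (hfwdD p hp2).2 (Multiset.mem_coe.1 hp1)
    obtain ⟨l₁, h1h, h1l, h1sub⟩ := extract t (Multiset.card M) M le_rfl hMnl s hst
      (by rw [hMex s]; simp [Ne.symm hst]) (by
        intro y' hyt hys
        rw [hMex y', if_neg (Ne.symm hys), if_neg (Ne.symm hyt)]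
        norm_num)
    set M₂ := M - (edgesOfL l₁ : Multiset _) with hM₂
    have hM₂ex : ∀ y', excessZ M₂ y' = (if s = y' then 1 else 0) - (if t = y' then 1 else 0) := by
      intro y'
      have e5 : M₂ + (edgesOfL l₁ : Multiset _) = M := by
        rw [hM₂]; exact tsub_add_cancel_of_le h1sub
      have e5' := excessZ_add M₂ (edgesOfL l₁ : Multiset _) y'
      rw [e5] at e5'
      have e6 : excessZ M₂ y' = excessZ M y' - excessZ (edgesOfL l₁ : Multiset _) y' := by linarith
      rw [e6, hMex y', excessZ_walk l₁ s t h1h h1l y']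
      split_ifs <;> ring
    obtain ⟨l₂, h2h, h2l, h2sub⟩ := extract t (Multiset.card M₂) M₂ le_rfl
      (fun p hp => hMnl p (Multiset.mem_of_le (Multiset.sub_le_self _ _) hp)) s hst
      (by rw [hM₂ex s]; simp [Ne.symm hst]) (by
        intro y' hyt hys
        rw [hM₂ex y', if_neg (Ne.symm hys), if_neg (Ne.symm hyt)]
        norm_num)
    have h2sub' : (edgesOfL l₂ : Multiset _) ≤ M := h2sub.trans (Multiset.sub_le_self _ _)
    have hdisjE : ∀ p ∈ edgesOfL l₁, p ∉ edgesOfL l₂ := by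
      intro p hp1 hp2
      have c1 : 1 ≤ Multiset.count p (edgesOfL l₁ : Multiset _) :=
        Multiset.one_le_count_iff_mem.2 (Multiset.mem_coe.2 hp1)
      have c2 : 1 ≤ Multiset.count p (edgesOfL l₂ : Multiset _) :=
        Multiset.one_le_count_iff_mem.2 (Multiset.mem_coe.2 hp2)
      have cM : Multiset.count p M ≤ 1 := Multiset.nodup_iff_count_le_one.1 hMnd p
      have d1 : Multiset.count p (edgesOfL l₁ : Multiset _) ≤ Multiset.count p M :=
        Multiset.le_iff_count.1 h1sub p
      have d2 : Multiset.count p (edgesOfL l₂ : Multiset _) ≤ Multiset.count p M₂ :=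
        Multiset.le_iff_count.1 h2sub p
      rw [hM₂, Multiset.count_sub] at d2
      omega
    have h1D : l₁.Chain' (Dsp E) := chain'_iff_edges.2
      (fun p hp => hMD p (Multiset.mem_of_le h1sub (Multiset.mem_coe.2 hp)))
    have h2D : l₂.Chain' (Dsp E) := chain'_iff_edges.2
      (fun p hp => hMD p (Multiset.mem_of_le h2sub' (Multiset.mem_coe.2 hp)))
    obtain ⟨m₁, hm₁, hmem₁⟩ := proj_walk w l₁.length l₁ le_rfl h1D v h1h h1l
    obtain ⟨m₂, hm₂, hmem₂⟩ := proj_walk w l₂.length l₂ le_rfl h2D v h2h h2l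
    obtain ⟨m₁', nd₁, c₁, hh₁, hl₁, sub₁, -⟩ := simplify m₁ hm₁.1
    obtain ⟨m₂', nd₂, c₂, hh₂, hl₂, sub₂, -⟩ := simplify m₂ hm₂.1
    have hp₁ : IsPathList E v w m₁' := ⟨c₁, by rw [hh₁]; exact hm₁.2.1, by rw [hl₁]; exact hm₁.2.2⟩
    have hp₂ : IsPathList E v w m₂' := ⟨c₂, by rw [hh₂]; exact hm₂.2.1, by rw [hl₂]; exact hm₂.2.2⟩
    have hintdisj : ∀ z' ∈ internalsL m₁', z' ∉ internalsL m₂' := by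
      intro z' hz1 hz2
      obtain ⟨hzv, hzw⟩ := internals_ne_head_last nd₁ hp₁.2.1 hp₁.2.2 hz1
      have hz1m : z' ∈ m₁ := sub₁ z' (internals_subset hz1)
      have hz2m : z' ∈ m₂ := sub₂ z' (internals_subset hz2)
      rcases hmem₁ z' hz1m with rfl | rfl | h₁
      · exact hzv rfl
      · exact hzw rfl
      rcases hmem₂ z' hz2m with rfl | rfl | h₂
      · exact hzv rfl
      · exact hzw rfl
      exact hdisjE _ h₁ h₂
    have hne' : m₁' ≠ m₂' := by
      intro heq
      have hintnil : internalsL m₁' = [] := by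
        rw [List.eq_nil_iff_forall_not_mem]
        intro z' hz'
        exact hintdisj z' hz' (heq ▸ hz')
      have h2' := internals_nil_two hp₁.2.1 hp₁.2.2 (path_length_two hp₁ hvw) hintnil
      rw [h2'] at hp₁
      exact hnE (List.isChain_cons_cons.1 hp₁.1).1
    exact ⟨m₁', m₂', hp₁, hp₂, nd₁, nd₂, hne', hintdisj⟩

theorem oneDir (hrt : Relation.ReflTransGen E v w) (hvw : v ≠ w)
    (hres : ∀ x, x ≠ v → x ≠ w → ∃ l, IsPathList E v w l ∧ l.Nodup ∧ x ∉ l)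
    (h2e : TwoEPaths E v w) : TwoVPaths E v w := by
  by_cases hE : E v w
  · obtain ⟨m₁, m₂, hm₁, hm₂, hdisj⟩ := h2e
    have hex : ∃ m, IsPathList E v w m ∧ (v, w) ∉ edgesOfL m := by
      by_cases h : (v, w) ∈ edgesOfL m₁
      · exact ⟨m₂, hm₂, hdisj _ h⟩
      · exact ⟨m₁, hm₁, h⟩
    obtain ⟨m, hm, hmvw⟩ := hex
    obtain ⟨l₂, nd₂, c₂, hh₂, hl₂, -, esub⟩ := simplify m hm.1
    have hp₂ : IsPathList E v w l₂ := ⟨c₂, by rw [hh₂]; exact hm.2.1, by rw [hl₂]; exact hm.2.2⟩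
    have hvwl₂ : (v, w) ∉ edgesOfL l₂ := fun h => hmvw (esub _ h)
    refine ⟨[v, w], l₂, ⟨?_, rfl, rfl⟩, hp₂, by simp [hvw], nd₂, ?_, ?_⟩
    · exact List.isChain_cons_cons.2 ⟨hE, List.isChain_singleton _⟩
    · intro heq
      apply hvwl₂
      rw [← heq]
      show (v, w) ∈ [(v, w)]
      simp
    · intro x hx
      simp [internalsL] at hx
  · exact menger2 hrt hvw hres hE

theorem twoV_to_delV (h : TwoVPaths E v w) {x : V} (hxv : x ≠ v) (hxw : x ≠ w) :
    Relation.ReflTransGen (delV E x) v w := by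
  obtain ⟨l₁, l₂, hp₁, hp₂, nd₁, nd₂, hne, hdisj⟩ := h
  have hex : ∃ l, IsPathList E v w l ∧ x ∉ internalsL l := by
    by_cases hx : x ∈ internalsL l₁
    · exact ⟨l₂, hp₂, hdisj _ hx⟩
    · exact ⟨l₁, hp₁, hx⟩
  obtain ⟨l, hp, hxint⟩ := hex
  have hxl : x ∉ l := fun hxl => hxint (mem_internals_of_ne hp.2.1 hp.2.2 hxl hxv hxw)
  have hc : l.Chain' (delV E x) := chain'_iff_edges.2 (fun p hpe =>
    ⟨chain'_iff_edges.1 hp.1 p hpe,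
     fun hh => hxl (hh ▸ (List.of_mem_zip hpe).1),
     fun hh => hxl (hh ▸ List.tail_subset _ (List.of_mem_zip hpe).2)⟩)
  exact rtg_of_path ⟨hc, hp.2.1, hp.2.2⟩

theorem twoV_to_twoE (h : TwoVPaths E v w) : TwoEPaths E v w := by
  obtain ⟨l₁, l₂, hp₁, hp₂, nd₁, nd₂, hne, hdisj⟩ := h
  refine ⟨l₁, l₂, hp₁, hp₂, ?_⟩
  rintro ⟨a, b⟩ he₁ he₂
  have ha1 : a ∈ l₁ := (List.of_mem_zip he₁).1
  have ha2 : a ∈ l₂ := (List.of_mem_zip he₂).1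
  have hb1 : b ∈ l₁ := List.tail_subset _ (List.of_mem_zip he₁).2
  have hb2 : b ∈ l₂ := List.tail_subset _ (List.of_mem_zip he₂).2
  have hav : a = v := by
    by_contra hav
    exact hdisj a
      (mem_internals_of_ne hp₁.2.1 hp₁.2.2 ha1 hav (edges_fst_ne_last nd₁ hp₁.2.2 he₁))
      (mem_internals_of_ne hp₂.2.1 hp₂.2.2 ha2 hav (edges_fst_ne_last nd₂ hp₂.2.2 he₂))
  have hbw : b = w := by
    by_contra hbw
    exact hdisj b
      (mem_internals_of_ne hp₁.2.1 hp₁.2.2 hb1 (edges_snd_ne_head nd₁ hp₁.2.1 he₁) hbw)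
      (mem_internals_of_ne hp₂.2.1 hp₂.2.2 hb2 (edges_snd_ne_head nd₂ hp₂.2.1 he₂) hbw)
  subst hav
  subst hbw
  have e1 := edge_head_last nd₁ hp₁.2.1 hp₁.2.2 he₁
  have e2 := edge_head_last nd₂ hp₂.2.1 hp₂.2.2 he₂
  exact hne (e1.trans e2.symm)

end Aux

/-- for distinct `v,w` in a strongly connected digraph,
`v↔2v w` iff `v↔vr w` and `v↔2e w`. -/
theorem stmt8 (E : V → V → Prop) (hsc : StronglyConn E) (v w : V) (hvw : v ≠ w) :
    TwoVConn E v w ↔ VRes E v w ∧ TwoEConn E v w := by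
  constructor
  · rintro ⟨hne, h1, h2⟩
    refine ⟨⟨hvw, ?_⟩, hvw, Aux.twoV_to_twoE h1, Aux.twoV_to_twoE h2⟩
    intro x hxv hxw
    exact ⟨Aux.twoV_to_delV h1 hxv hxw, Aux.twoV_to_delV h2 hxw hxv⟩
  · rintro ⟨⟨-, hvr⟩, -, h2e1, h2e2⟩
    refine ⟨hvw, ?_, ?_⟩
    · refine Aux.oneDir (hsc v w) hvw ?_ h2e1
      intro x hxv hxw
      exact Aux.delV_to_path hxv (hvr x hxv hxw).1
    · refine Aux.oneDir (hsc w v) (Ne.symm hvw) ?_ h2e2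
      intro x hxw hxv
      exact Aux.delV_to_path hxw (hvr x hxv hxw).2
end

section
/- Let G be a strongly connected digraph with start vertex s and dominator tree D(s). Let r be a vertex and v a vertex that is not a descendant of r in D(s). Then there is a path in G from v to r containing no proper descendant of r in D(s), and every path from v to any descendant of r in D(s) contains r. -/
variable {V : Type*}

lemma path_ne_nil {E : V → V → Prop} {a b : V} {l : List V}
    (h : IsPathList E a b l) : l ≠ [] := by
  rintro rfl; simp [IsPathList] at h

lemma path_trans {E : V → V → Prop} {a b c : V} {l₁ l₂ : List V}
    (h₁ : IsPathList E a b l₁) (h₂ : IsPathList E b c l₂) :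
    ∃ l, IsPathList E a c l ∧ ∀ x ∈ l, x ∈ l₁ ∨ x ∈ l₂ := by
  obtain ⟨hc₁, hh₁, hg₁⟩ := h₁
  obtain ⟨hc₂, hh₂, hg₂⟩ := h₂
  have hne₁ : l₁ ≠ [] := by rintro rfl; simp at hh₁
  cases l₂ with
  | nil => simp at hh₂
  | cons y t =>
    have hy : y = b := by simpa using hh₂
    subst hy
    cases t with
    | nil =>
      have hbc : y = c := by simpa using hg₂
      subst hbc
      exact ⟨l₁, ⟨hc₁, hh₁, hg₁⟩, fun x hx => Or.inl hx⟩
    | cons z t' =>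
      refine ⟨l₁ ++ z :: t', ⟨?_, ?_, ?_⟩, ?_⟩
      · rw [show List.Chain' E (l₁ ++ z :: t') = List.IsChain E (l₁ ++ z :: t') from rfl, List.isChain_append]
        refine ⟨hc₁, hc₂.tail, ?_⟩
        intro x hx yy hyy
        rw [hg₁] at hx
        have hE : E y z := (List.isChain_cons.mp hc₂).1 z rfl
        simp at hx hyy
        subst hx; subst hyy; exact hE
      · rw [List.head?_append_of_ne_nil _ hne₁]
        exact hh₁
      · rw [List.getLast?_append_of_ne_nil _ (by simp)]
        rw [List.getLast?_cons_cons] at hg₂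
        exact hg₂
      · intro x hx
        rcases List.mem_append.mp hx with h | h
        · exact Or.inl h
        · exact Or.inr (by simp [h])

lemma path_snoc {E : V → V → Prop} {a b y : V} {l : List V}
    (h : IsPathList E a b l) (hE : E b y) :
    IsPathList E a y (l ++ [y]) := by
  have h2 : IsPathList E b y [b, y] := by
    refine ⟨?_, rfl, rfl⟩
    simp [List.Chain', List.isChain_cons_cons, hE]
  obtain ⟨hc, hh, hg⟩ := h
  have hne : l ≠ [] := by rintro rfl; simp at hh
  refine ⟨?_, ?_, ?_⟩
  · rw [show List.Chain' E (l ++ [y]) = List.IsChain E (l ++ [y]) from rfl, List.isChain_append]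
    refine ⟨hc, List.isChain_singleton _, ?_⟩
    intro x hx yy hyy
    rw [hg] at hx; simp at hx hyy; subst hx; subst hyy; exact hE
  · rw [List.head?_append_of_ne_nil _ hne]; exact hh
  · exact List.getLast?_concat

lemma rtg_path {E : V → V → Prop} {a b : V}
    (h : Relation.ReflTransGen E a b) : ∃ l, IsPathList E a b l := by
  induction h with
  | refl => exact ⟨[a], by simp [IsPathList, List.Chain', List.isChain_singleton]⟩
  | tail _ hE ih =>
    obtain ⟨l, hl⟩ := ih
    exact ⟨_, path_snoc hl hE⟩

lemma dom_self {E : V → V → Prop} (s r : V) : DomOf E s r r := by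
  intro l hl
  have := hl.2.2
  exact List.mem_of_getLast? this

lemma key_lemma {E : V → V → Prop} {s r : V} :
    ∀ l : List V, ∀ v, IsPathList E v r l → ¬ DomOf E s r v →
      ∃ l', IsPathList E v r l' ∧ ∀ x ∈ l', DomOf E s r x → x = r := by
  intro l
  induction l with
  | nil => intro v h _; exact absurd rfl (path_ne_nil h)
  | cons a t ih =>
    intro v h hv
    obtain ⟨hc, hh, hg⟩ := h
    have hav : a = v := by simpa using hh
    subst hav
    simp only [DomOf] at hv
    push_neg at hv
    obtain ⟨l₀, hl₀, hrl₀⟩ := hv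
    have hanr : ¬ DomOf E s r a := by
      intro hd; exact hrl₀ (hd l₀ hl₀)
    cases t with
    | nil =>
      have : a = r := by simpa using hg
      subst this
      exact absurd (dom_self s a) hanr
    | cons y t' =>
      have hE : E a y := (List.isChain_cons_cons.mp hc).1
      by_cases hy : DomOf E s r y
      · have hyr : y = r := by
          have hp := path_snoc hl₀ hE
          have := hy _ hp
          rcases List.mem_append.mp this with h' | h'
          · exact absurd h' hrl₀
          · exact (by simpa using h' : r = y).symm
        rw [hyr] at hE
        refine ⟨[a, r], ⟨by simp [List.Chain', List.isChain_cons_cons, hE], rfl, rfl⟩, ?_⟩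
        intro x hx hdx
        rcases (by simpa using hx : x = a ∨ x = r) with rfl | rfl
        · exact absurd hdx hanr
        · rfl
      · have hpath : IsPathList E y r (y :: t') :=
          ⟨(List.isChain_cons_cons.mp hc).2, rfl, by simpa using hg⟩
        obtain ⟨l', hl', hp⟩ := ih y hpath hy
        have hne' : l' ≠ [] := path_ne_nil hl'
        refine ⟨a :: l', ⟨?_, rfl, ?_⟩, ?_⟩
        · rw [show List.Chain' E (a :: l') = List.IsChain E (a :: l') from rfl, List.isChain_cons]
          refine ⟨?_, hl'.1⟩
          intro z hz
          rw [hl'.2.1] at hz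
          simp at hz; subst hz; exact hE
        · obtain ⟨z, t'', rfl⟩ := List.exists_cons_of_ne_nil hne'
          rw [List.getLast?_cons_cons]
          exact hl'.2.2
        · intro x hx hdx
          rcases List.mem_cons.mp hx with rfl | h'
          · exact absurd hdx hanr
          · exact hp x h' hdx

/-- let `r` be a vertex and `v` a vertex that is not a descendant of `r`
in `D(s)` (i.e. `r` does not dominate `v`). Then there is a path from `v` to `r`
containing no proper descendant of `r` in `D(s)`, and every path from `v` to any
descendant of `r` in `D(s)` contains `r`. -/
theorem stmt10 (E : V → V → Prop) (s : V) (hsc : StronglyConn E)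
    (r v : V) (hv : ¬ DomOf E s r v) :
    (∃ l : List V, IsPathList E v r l ∧ ∀ x ∈ l, DomOf E s r x → x = r) ∧
    (∀ w, DomOf E s r w → ∀ l : List V, IsPathList E v w l → r ∈ l) := by
  constructor
  · obtain ⟨l, hl⟩ := rtg_path (hsc v r)
    exact key_lemma l v hl hv
  · intro w hw l hl
    simp only [DomOf] at hv
    push_neg at hv
    obtain ⟨l₀, hl₀, hrl₀⟩ := hv
    obtain ⟨L, hL, hmem⟩ := path_trans hl₀ hl
    rcases hmem r (hw L hL) with h | h
    · exact absurd h hrl₀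
    · exact h
end
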